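/- arXiv:2209.14662 — 5 statements merged into one kernel-verified Lean document; each statement's English description precedes it below -/
import Mathlib

section
/- If a ≥ (2+ε)·log₂(n) for some ε > 0, then n^{2a} · 2^{-a^2} ≤ 2^{-(ε²+2ε)·log₂(n)²}; in particular the probability that a random graph G(n,1/2) contains K_{a,a} as a subgraph tends to 0 as n → ∞. -/
open scoped Classical

/-- A graph on `Fin n`, encoded as `f : Sym2 (Fin n) → Bool`, contains `K_{a,a}` as a
subgraph. -/
def ContainsBiclique (n : ℕ) (f : Sym2 (Fin n) → Bool) (a : ℕ) : Prop :=
  ∃ A B : Finset (Fin n), Disjoint A B ∧ A.card = a ∧ B.card = a ∧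
    ∀ u ∈ A, ∀ v ∈ B, f s(u, v) = true

/-- The probability that `G(n, 1/2)` contains `K_{a,a}` as a subgraph. -/
noncomputable def bicliqueProb (n a : ℕ) : ℝ :=
  (Fintype.card {f : Sym2 (Fin n) → Bool // ContainsBiclique n f a} : ℝ) /
    (Fintype.card (Sym2 (Fin n) → Bool) : ℝ)

lemma cardA {α : Type*} [Fintype α] [DecidableEq α] (s : Finset α) :
    (Finset.univ.filter (fun f : α → Bool => ∀ e ∈ s, f e = true)).card ≤
      2 ^ (Fintype.card α - s.card) := by
  classical
  calc (Finset.univ.filter (fun f : α → Bool => ∀ e ∈ s, f e = true)).card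
      ≤ Fintype.card ({x // x ∈ sᶜ} → Bool) := by
        apply Finset.card_le_card_of_injOn (fun f => fun e => f e.1)
        · intro f _; exact Finset.mem_univ _
        · intro f hf g hg hfg
          rw [Finset.mem_coe, Finset.mem_filter] at hf hg
          funext e
          by_cases he : e ∈ s
          · rw [hf.2 e he, hg.2 e he]
          · exact congrFun hfg ⟨e, Finset.mem_compl.2 he⟩
    _ = 2 ^ (Fintype.card α - s.card) := by
        rw [Fintype.card_fun]
        simp [Finset.card_compl]

lemma cardEdges {n : ℕ} {A B : Finset (Fin n)} (h : Disjoint A B) :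
    ((A ×ˢ B).image (fun p => s(p.1, p.2))).card = A.card * B.card := by
  rw [Finset.card_image_of_injOn, Finset.card_product]
  rintro ⟨u, v⟩ huv ⟨u', v'⟩ huv' he
  simp only [Finset.mem_coe, Finset.mem_product] at huv huv'
  simp only [Sym2.eq, Sym2.rel_iff', Prod.mk.injEq, Prod.swap_prod_mk] at he
  rcases he with ⟨h1, h2⟩ | ⟨h1, h2⟩
  · simp [h1, h2]
  · exact absurd (Finset.disjoint_left.1 h huv.1) (by simp [h1, huv'.2])

lemma count_le (n a : ℕ) :
    (Finset.univ.filter (fun f : Sym2 (Fin n) → Bool => ContainsBiclique n f a)).card ≤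
      (n.choose a) ^ 2 * 2 ^ (Fintype.card (Sym2 (Fin n)) - a ^ 2) := by
  classical
  set N := Fintype.card (Sym2 (Fin n)) with hN
  set T : Finset (Finset (Fin n) × Finset (Fin n)) :=
    Finset.univ.filter (fun p => Disjoint p.1 p.2 ∧ p.1.card = a ∧ p.2.card = a) with hT
  set F : Finset (Fin n) × Finset (Fin n) → Finset (Sym2 (Fin n) → Bool) :=
    fun p => Finset.univ.filter
      (fun f => ∀ e ∈ (p.1 ×ˢ p.2).image (fun q => s(q.1, q.2)), f e = true) with hF
  have hsub : Finset.univ.filter (fun f : Sym2 (Fin n) → Bool => ContainsBiclique n f a) ⊆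
      T.biUnion F := by
    intro f hf
    rw [Finset.mem_filter] at hf
    obtain ⟨A, B, hd, hA, hB, hfab⟩ := hf.2
    refine Finset.mem_biUnion.2 ⟨(A, B), ?_, ?_⟩
    · simp [hT, hd, hA, hB]
    · simp only [hF, Finset.mem_filter, Finset.mem_univ, true_and]
      intro e he
      obtain ⟨⟨u, v⟩, huv, rfl⟩ := Finset.mem_image.1 he
      rw [Finset.mem_product] at huv
      exact hfab u huv.1 v huv.2
  have hper : ∀ p ∈ T, (F p).card ≤ 2 ^ (N - a ^ 2) := by
    intro p hp
    simp only [hT, Finset.mem_filter, Finset.mem_univ, true_and] at hp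
    have := cardA ((p.1 ×ˢ p.2).image (fun q => s(q.1, q.2)))
    rwa [cardEdges hp.1, hp.2.1, hp.2.2, ← sq] at this
  have hTcard : T.card ≤ (n.choose a) ^ 2 := by
    have : T ⊆ (Finset.univ.powersetCard a) ×ˢ (Finset.univ.powersetCard a) := by
      intro p hp
      simp only [hT, Finset.mem_filter, Finset.mem_univ, true_and] at hp
      simp [Finset.mem_product, Finset.mem_powersetCard, hp.2.1, hp.2.2]
    calc T.card ≤ _ := Finset.card_le_card this
      _ = (n.choose a) ^ 2 := by
          rw [Finset.card_product, Finset.card_powersetCard]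
          simp [sq]
  calc (Finset.univ.filter (fun f : Sym2 (Fin n) → Bool => ContainsBiclique n f a)).card
      ≤ (T.biUnion F).card := Finset.card_le_card hsub
    _ ≤ ∑ p ∈ T, (F p).card := Finset.card_biUnion_le
    _ ≤ ∑ _p ∈ T, 2 ^ (N - a ^ 2) := Finset.sum_le_sum hper
    _ = T.card * 2 ^ (N - a ^ 2) := by rw [Finset.sum_const, smul_eq_mul]
    _ ≤ (n.choose a) ^ 2 * 2 ^ (N - a ^ 2) := Nat.mul_le_mul_right _ hTcard

lemma prob_le (n a : ℕ) :
    bicliqueProb n a ≤ (n : ℝ) ^ (2 * a) * ((2 : ℝ) ^ (a ^ 2))⁻¹ := by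
  classical
  set N := Fintype.card (Sym2 (Fin n)) with hN
  have hdenom : (Fintype.card (Sym2 (Fin n) → Bool) : ℝ) = 2 ^ N := by
    rw [Fintype.card_fun, Fintype.card_bool]
    push_cast
    ring
  have hnum : Fintype.card {f : Sym2 (Fin n) → Bool // ContainsBiclique n f a} =
      (Finset.univ.filter (fun f : Sym2 (Fin n) → Bool => ContainsBiclique n f a)).card := by
    rw [Fintype.card_subtype]
  rcases le_or_gt (a ^ 2) N with hle | hgt
  · have hC := count_le n a
    have h2N : (0:ℝ) < 2 ^ N := by positivity
    rw [bicliqueProb, hdenom, hnum, div_le_iff₀ h2N]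
    calc ((Finset.univ.filter (fun f : Sym2 (Fin n) → Bool => ContainsBiclique n f a)).card : ℝ)
        ≤ ((n.choose a) ^ 2 * 2 ^ (N - a ^ 2) : ℕ) := by exact_mod_cast hC
      _ = ((n.choose a : ℝ)) ^ 2 * 2 ^ (N - a ^ 2) := by push_cast; ring
      _ ≤ ((n : ℝ) ^ a) ^ 2 * 2 ^ (N - a ^ 2) := by
          gcongr
          exact_mod_cast Nat.choose_le_pow n a
      _ = (n : ℝ) ^ (2 * a) * 2 ^ (N - a ^ 2) := by rw [← pow_mul, mul_comm a 2]
      _ = (n : ℝ) ^ (2 * a) * ((2 : ℝ) ^ (a ^ 2))⁻¹ * 2 ^ N := by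
          rw [mul_assoc]
          congr 1
          rw [inv_mul_eq_div, eq_div_iff (by positivity), ← pow_add,
            Nat.sub_add_cancel hle]
  · have hempty : Fintype.card {f : Sym2 (Fin n) → Bool // ContainsBiclique n f a} = 0 := by
      rw [hnum, Finset.card_eq_zero, Finset.filter_eq_empty_iff]
      intro f _
      intro hcon
      obtain ⟨A, B, hd, hA, hB, -⟩ := hcon
      have h1 : ((A ×ˢ B).image (fun p => s(p.1, p.2))).card ≤ N :=
        Finset.card_le_univ _
      rw [cardEdges hd, hA, hB, ← sq] at h1
      omega
    rw [bicliqueProb, hempty]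
    simp only [Nat.cast_zero, zero_div]
    positivity

/-- if `a ≥ (2+ε)·log₂ n` then `n^{2a}·2^{-a²} ≤ 2^{-(ε²+2ε)·log₂(n)²}`;
in particular, the probability that `G(n,1/2)` contains `K_{a,a}` tends to `0`. -/
theorem stmt_2 (ε : ℝ) (hε : 0 < ε) :
    (∀ (n : ℕ) (a : ℝ), 2 ≤ n → (2 + ε) * Real.logb 2 n ≤ a →
      (n : ℝ) ^ (2 * a) * 2 ^ (-(a ^ 2)) ≤
        2 ^ (-((ε ^ 2 + 2 * ε) * (Real.logb 2 n) ^ 2))) ∧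
    (∀ a : ℕ → ℕ, (∀ n : ℕ, (2 + ε) * Real.logb 2 n ≤ (a n : ℝ)) →
      Filter.Tendsto (fun n => bicliqueProb n (a n)) Filter.atTop (nhds 0)) := by
  have part1 : ∀ (n : ℕ) (a : ℝ), 2 ≤ n → (2 + ε) * Real.logb 2 n ≤ a →
      (n : ℝ) ^ (2 * a) * 2 ^ (-(a ^ 2)) ≤
        2 ^ (-((ε ^ 2 + 2 * ε) * (Real.logb 2 n) ^ 2)) := by
    intro n a hn ha
    set L := Real.logb 2 n with hL
    have hnpos : (0 : ℝ) < n := by positivity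
    have hn1 : (1 : ℝ) ≤ n := by exact_mod_cast Nat.one_le_of_lt hn
    have hL0 : 0 ≤ L := Real.logb_nonneg one_lt_two hn1
    have hne : (n : ℝ) = 2 ^ L := (Real.rpow_logb two_pos (by norm_num) hnpos).symm
    rw [hne, ← Real.rpow_mul (by norm_num : (0:ℝ) ≤ 2),
      ← Real.rpow_add two_pos, Real.rpow_le_rpow_left_iff one_lt_two]
    nlinarith [sq_nonneg (a - (2 + ε) * L), mul_nonneg (sub_nonneg.2 ha) hL0,
      mul_nonneg (mul_nonneg hε.le (sub_nonneg.2 ha)) hL0]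
  refine ⟨part1, ?_⟩
  intro a ha
  have hc : 0 < ε ^ 2 + 2 * ε := by positivity
  have hg : Filter.Tendsto
      (fun n : ℕ => (2 : ℝ) ^ (-((ε ^ 2 + 2 * ε) * (Real.logb 2 n) ^ 2)))
      Filter.atTop (nhds 0) := by
    have h1 : Filter.Tendsto (fun n : ℕ => Real.logb 2 n) Filter.atTop Filter.atTop :=
      (Real.tendsto_logb_atTop one_lt_two).comp tendsto_natCast_atTop_atTop
    have h2 : Filter.Tendsto (fun n : ℕ => (ε ^ 2 + 2 * ε) * (Real.logb 2 n) ^ 2)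
        Filter.atTop Filter.atTop :=
      ((Filter.tendsto_pow_atTop two_ne_zero).comp h1).const_mul_atTop hc
    have h3 : Filter.Tendsto (fun n : ℕ => -((ε ^ 2 + 2 * ε) * (Real.logb 2 n) ^ 2))
        Filter.atTop Filter.atBot := Filter.tendsto_neg_atTop_atBot.comp h2
    have h4 : Filter.Tendsto (fun n : ℕ =>
        -((ε ^ 2 + 2 * ε) * (Real.logb 2 n) ^ 2) * Real.log 2)
        Filter.atTop Filter.atBot := h3.atBot_mul_const (Real.log_pos one_lt_two)
    have := Real.tendsto_exp_atBot.comp h4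
    refine this.congr fun n => ?_
    rw [Function.comp_apply, Real.rpow_def_of_pos two_pos, mul_comm]
  apply squeeze_zero' (g := fun n : ℕ => (2 : ℝ) ^ (-((ε ^ 2 + 2 * ε) * (Real.logb 2 n) ^ 2)))
  · exact Filter.Eventually.of_forall fun n =>
      div_nonneg (Nat.cast_nonneg _) (Nat.cast_nonneg _)
  · filter_upwards [Filter.eventually_ge_atTop 2] with n hn
    calc bicliqueProb n (a n) ≤ (n : ℝ) ^ (2 * a n) * ((2 : ℝ) ^ (a n ^ 2))⁻¹ := prob_le n (a n)
      _ = (n : ℝ) ^ (2 * (a n : ℝ)) * 2 ^ (-((a n : ℝ) ^ 2)) := by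
          rw [Real.rpow_neg (by norm_num : (0:ℝ) ≤ 2)]
          congr 1
          · rw [← Real.rpow_natCast (n : ℝ) (2 * a n)]
            push_cast
            ring_nf
          · congr 1
            rw [← Real.rpow_natCast (2 : ℝ) (a n ^ 2)]
            push_cast
            ring_nf
      _ ≤ 2 ^ (-((ε ^ 2 + 2 * ε) * (Real.logb 2 n) ^ 2)) := part1 n (a n) hn (ha n)
  · exact hg
end

section
/- For every k ∈ ℕ there exists a constant c_k > 0 such that for all sufficiently large n there is a simple graph G on n vertices satisfying: (1) G has at least n²/8 edges; (2) G contains no complete bipartite subgraph K_{a,a} with a ≥ 3·log₂(n); and (3) G contains at least c_k · n^k many k-cliques. -/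
open scoped Classical

open Finset



abbrev ED (n : ℕ) := {s : Sym2 (Fin n) // ¬ s.IsDiag}

variable {n : ℕ}

def graphOf (E : Finset (ED n)) : SimpleGraph (Fin n) where
  Adj u v := ∃ d ∈ E, (d : Sym2 (Fin n)) = s(u, v)
  symm := by
    constructor
    rintro u v ⟨d, hd, h⟩
    exact ⟨d, hd, h.trans Sym2.eq_swap⟩
  loopless := by
    constructor
    rintro u ⟨d, hd, h⟩
    exact d.2 (by rw [h]; simp)

lemma edgeSet_graphOf (E : Finset (ED n)) :
    (graphOf E).edgeSet = Subtype.val '' (E : Set (ED n)) := by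
  ext e
  induction e with
  | _ u v =>
    simp only [SimpleGraph.mem_edgeSet, graphOf, Set.mem_image]
    constructor
    · rintro ⟨d, hd, h⟩; exact ⟨d, hd, h⟩
    · rintro ⟨d, hd, h⟩; exact ⟨d, hd, h⟩

lemma ncard_edgeSet (E : Finset (ED n)) : (graphOf E).edgeSet.ncard = E.card := by
  rw [edgeSet_graphOf, Set.ncard_image_of_injective _ Subtype.val_injective,
    Set.ncard_coe_finset]

noncomputable def cliquePat (T : Finset (Fin n)) : Finset (ED n) :=
  (T.offDiag.image Sym2.mk.uncurry).subtype (fun s : Sym2 (Fin n) => ¬ s.IsDiag)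

lemma mem_cliquePat {T : Finset (Fin n)} {d : ED n} :
    d ∈ cliquePat T ↔ ∃ u v : Fin n, u ∈ T ∧ v ∈ T ∧ u ≠ v ∧ (d : Sym2 (Fin n)) = s(u, v) := by
  simp only [cliquePat, Finset.mem_subtype, Finset.mem_image, Finset.mem_offDiag]
  constructor
  · rintro ⟨⟨u, v⟩, ⟨hu, hv, huv⟩, h⟩; exact ⟨u, v, hu, hv, huv, h.symm⟩
  · rintro ⟨u, v, hu, hv, huv, h⟩; exact ⟨(u, v), ⟨hu, hv, huv⟩, h.symm⟩

lemma card_cliquePat (T : Finset (Fin n)) : (cliquePat T).card = T.card.choose 2 := by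
  rw [cliquePat, Finset.card_subtype, Finset.filter_true_of_mem, Sym2.card_image_offDiag]
  rintro x hx
  rw [Finset.mem_image] at hx
  obtain ⟨⟨u, v⟩, hm, rfl⟩ := hx
  rw [Finset.mem_offDiag] at hm
  simpa using hm.2.2

lemma cliquePat_inter (T T' : Finset (Fin n)) :
    cliquePat T ∩ cliquePat T' = cliquePat (T ∩ T') := by
  ext d
  simp only [Finset.mem_inter, mem_cliquePat]
  constructor
  · rintro ⟨⟨u, v, hu, hv, huv, h⟩, ⟨u', v', hu', hv', huv', h'⟩⟩
    rw [h] at h'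
    rcases Sym2.eq_iff.mp h' with ⟨rfl, rfl⟩ | ⟨rfl, rfl⟩
    · exact ⟨u, v, ⟨hu, hu'⟩, ⟨hv, hv'⟩, huv, h⟩
    · exact ⟨u, v, ⟨hu, hv'⟩, ⟨hv, hu'⟩, huv, h⟩
  · rintro ⟨u, v, ⟨hu, hu'⟩, ⟨hv, hv'⟩, huv, h⟩
    exact ⟨⟨u, v, hu, hv, huv, h⟩, ⟨u, v, hu', hv', huv, h⟩⟩

lemma cliquePat_subset_iff {T : Finset (Fin n)} {E : Finset (ED n)} :
    cliquePat T ⊆ E ↔ (graphOf E).IsClique (T : Set (Fin n)) := by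
  constructor
  · intro h u hu v hv huv
    have hmem : (⟨s(u, v), by simp [huv]⟩ : ED n) ∈ cliquePat T :=
      mem_cliquePat.mpr ⟨u, v, hu, hv, huv, rfl⟩
    exact ⟨_, h hmem, rfl⟩
  · intro h d hd
    obtain ⟨u, v, hu, hv, huv, hval⟩ := mem_cliquePat.mp hd
    obtain ⟨d', hd', hval'⟩ := h hu hv huv
    rwa [show d = d' from Subtype.ext (hval.trans hval'.symm)]

noncomputable def bicPat (A B : Finset (Fin n)) : Finset (ED n) :=
  ((A ×ˢ B).image Sym2.mk.uncurry).subtype (fun s : Sym2 (Fin n) => ¬ s.IsDiag)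

lemma mem_bicPat {A B : Finset (Fin n)} (h : Disjoint A B) {d : ED n} :
    d ∈ bicPat A B ↔ ∃ u v : Fin n, u ∈ A ∧ v ∈ B ∧ (d : Sym2 (Fin n)) = s(u, v) := by
  simp only [bicPat, Finset.mem_subtype, Finset.mem_image, Finset.mem_product]
  constructor
  · rintro ⟨⟨u, v⟩, ⟨hu, hv⟩, hh⟩; exact ⟨u, v, hu, hv, hh.symm⟩
  · rintro ⟨u, v, hu, hv, hh⟩; exact ⟨(u, v), ⟨hu, hv⟩, hh.symm⟩

lemma card_bicPat {A B : Finset (Fin n)} (h : Disjoint A B) :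
    (bicPat A B).card = A.card * B.card := by
  have hne : ∀ p ∈ A ×ˢ B, p.1 ≠ p.2 := by
    rintro ⟨u, v⟩ hm
    rw [Finset.mem_product] at hm
    intro he
    exact (Finset.disjoint_left.mp h hm.1) (he ▸ hm.2)
  rw [bicPat, Finset.card_subtype, Finset.filter_true_of_mem, Finset.card_image_of_injOn,
    Finset.card_product]
  · rintro ⟨u, v⟩ hm ⟨u', v'⟩ hm' he
    have h1 := hm; have h2 := hm'
    rw [Finset.mem_coe, Finset.mem_product] at h1 h2
    rcases Sym2.eq_iff.mp he with ⟨rfl, rfl⟩ | ⟨rfl, rfl⟩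
    · rfl
    · exact absurd h2.2 (Finset.disjoint_left.mp h h1.1)
  · rintro x hx
    rw [Finset.mem_image] at hx
    obtain ⟨⟨u, v⟩, hm, rfl⟩ := hx
    simpa using hne _ hm

lemma card_ED : Fintype.card (ED n) = n.choose 2 := by
  simpa using Sym2.card_subtype_not_diag (α := Fin n)

lemma count_supersets (P : Finset (ED n)) :
    ((Finset.univ : Finset (Finset (ED n))).filter (fun E => P ⊆ E)).card
      = 2 ^ (Fintype.card (ED n) - P.card) := by
  have h : ((Finset.univ : Finset (Finset (ED n))).filter (fun E => P ⊆ E)).card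
      = ((Finset.univ \ P).powerset).card := by
    apply Finset.card_bij' (fun E _ => E \ P) (fun F _ => F ∪ P)
    · intro E hE
      rw [Finset.mem_filter] at hE
      rw [Finset.mem_powerset]
      exact Finset.sdiff_subset_sdiff (Finset.subset_univ _) le_rfl
    · intro F hF
      rw [Finset.mem_filter]
      exact ⟨Finset.mem_univ _, Finset.subset_union_right⟩
    · intro E hE
      rw [Finset.mem_filter] at hE
      exact Finset.sdiff_union_of_subset hE.2
    · intro F hF
      rw [Finset.mem_powerset] at hF
      rw [Finset.union_sdiff_right]
      exact Finset.sdiff_eq_self_of_disjoint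
        (Finset.disjoint_of_subset_left hF (Finset.sdiff_disjoint))
  rw [h, Finset.card_powerset, Finset.card_sdiff_of_subset (Finset.subset_univ _), Finset.card_univ]

lemma choose_mono_right {r s : ℕ} (hrs : r ≤ s) (hs : 2 * s ≤ n) :
    n.choose r ≤ n.choose s := by
  induction s with
  | zero => simp [Nat.le_zero.mp hrs]
  | succ m ih =>
    rcases Nat.eq_or_lt_of_le hrs with rfl | h
    · exact le_rfl
    · exact (ih (Nat.lt_succ_iff.mp h) (by omega)).trans
        (Nat.choose_le_succ_of_lt_half_left (by omega))

lemma count_ext {k : ℕ} (I : Finset (Fin n)) :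
    ((Finset.univ.powersetCard k).filter (fun T' : Finset (Fin n) => I ⊆ T')).card
      ≤ n.choose (k - I.card) := by
  have h : ((Finset.univ : Finset (Fin n)).powersetCard (k - I.card)).card
      = n.choose (k - I.card) := by
    rw [Finset.card_powersetCard, Finset.card_univ, Fintype.card_fin]
  rw [← h]
  apply Finset.card_le_card_of_injOn (fun T' => T' \ I)
  · intro T' hT'
    rw [Finset.mem_coe, Finset.mem_filter, Finset.mem_powersetCard] at hT'
    rw [Finset.mem_coe, Finset.mem_powersetCard]
    exact ⟨Finset.subset_univ _, by rw [Finset.card_sdiff_of_subset hT'.2]; rw [hT'.1.2]⟩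
  · intro a ha b hb hab
    rw [Finset.mem_coe, Finset.mem_filter] at ha hb
    have := congrArg (fun S => S ∪ I) hab
    simpa [Finset.sdiff_union_of_subset ha.2, Finset.sdiff_union_of_subset hb.2] using this

lemma inner_bound {k : ℕ} (hkn : 2 * k ≤ n) (T : Finset (Fin n)) (hT : T.card = k) :
    ∑ T' ∈ Finset.univ.powersetCard k,
        2 ^ (((T ∩ T').card).choose 2) ≤ 2 ^ (k + k.choose 2) * n.choose k := by
  have step1 : ∀ T' : Finset (Fin n),
      (2:ℕ) ^ (((T ∩ T').card).choose 2)
        ≤ ∑ I ∈ T.powerset, if I ⊆ T' then 2 ^ ((I.card).choose 2) else 0 := by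
    intro T'
    have hmem : T ∩ T' ∈ T.powerset := by
      rw [Finset.mem_powerset]; exact Finset.inter_subset_left
    calc (2:ℕ) ^ (((T ∩ T').card).choose 2)
        = if (T ∩ T') ⊆ T' then 2 ^ (((T ∩ T').card).choose 2) else 0 := by
          rw [if_pos Finset.inter_subset_right]
      _ ≤ _ := Finset.single_le_sum (f := fun I => if I ⊆ T' then 2 ^ ((I.card).choose 2) else 0)
          (fun i _ => by positivity) hmem
  calc ∑ T' ∈ Finset.univ.powersetCard k, 2 ^ (((T ∩ T').card).choose 2)
      ≤ ∑ T' ∈ Finset.univ.powersetCard k, ∑ I ∈ T.powerset,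
          if I ⊆ T' then 2 ^ ((I.card).choose 2) else 0 :=
        Finset.sum_le_sum (fun T' _ => step1 T')
    _ = ∑ I ∈ T.powerset, ∑ T' ∈ Finset.univ.powersetCard k,
          if I ⊆ T' then 2 ^ ((I.card).choose 2) else 0 := Finset.sum_comm
    _ = ∑ I ∈ T.powerset, 2 ^ ((I.card).choose 2) *
          ((Finset.univ.powersetCard k).filter (fun T' : Finset (Fin n) => I ⊆ T')).card := by
        refine Finset.sum_congr rfl (fun I _ => ?_)
        rw [Finset.card_filter]
        rw [Finset.mul_sum]
        refine Finset.sum_congr rfl (fun T' _ => ?_)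
        by_cases h : I ⊆ T' <;> simp [h]
    _ ≤ ∑ I ∈ T.powerset, 2 ^ (k.choose 2) * n.choose k := by
        refine Finset.sum_le_sum (fun I hI => ?_)
        rw [Finset.mem_powerset] at hI
        have h1 : (I.card).choose 2 ≤ k.choose 2 :=
          Nat.choose_le_choose 2 (hT ▸ Finset.card_le_card hI)
        have h2 := (count_ext (k := k) I).trans
          (choose_mono_right (Nat.sub_le _ _) hkn)
        exact Nat.mul_le_mul (Nat.pow_le_pow_right (by norm_num) h1) h2
    _ = 2 ^ (k + k.choose 2) * n.choose k := by
        rw [Finset.sum_const, Finset.card_powerset, hT, smul_eq_mul, pow_add, mul_assoc]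

noncomputable def Xcnt (k : ℕ) (E : Finset (ED n)) : ℕ :=
  ((Finset.univ.powersetCard k).filter (fun T : Finset (Fin n) => cliquePat T ⊆ E)).card

lemma Xcnt_eq_ncard (k : ℕ) (E : Finset (ED n)) :
    {t : Finset (Fin n) | (graphOf E).IsNClique k t}.ncard = Xcnt k E := by
  have h1 : {t : Finset (Fin n) | (graphOf E).IsNClique k t}
      = ↑((Finset.univ : Finset (Finset (Fin n))).filter
          (fun t => (graphOf E).IsNClique k t)) := by
    ext t; simp
  rw [h1, Set.ncard_coe_finset]
  congr 1
  ext T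
  simp only [Finset.mem_filter, Finset.mem_univ, true_and, Finset.mem_powersetCard,
    SimpleGraph.isNClique_iff, cliquePat_subset_iff]
  constructor
  · rintro ⟨hc, hk⟩; exact ⟨⟨Finset.subset_univ _, hk⟩, hc⟩
  · rintro ⟨⟨-, hk⟩, hc⟩; exact ⟨hc, hk⟩

lemma sum_Xcnt (k : ℕ) (hkn : k ≤ n) :
    (∑ E : Finset (ED n), Xcnt k E) * 2 ^ k.choose 2
      = n.choose k * 2 ^ Fintype.card (ED n) := by
  classical
  have hswap : (∑ E : Finset (ED n), Xcnt k E)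
      = ∑ T ∈ Finset.univ.powersetCard k,
          ((Finset.univ : Finset (Finset (ED n))).filter (fun E => cliquePat T ⊆ E)).card := by
    simp only [Xcnt, Finset.card_filter]
    exact Finset.sum_comm
  rw [hswap]
  have hK : k.choose 2 ≤ Fintype.card (ED n) := by
    rw [card_ED]; exact Nat.choose_le_choose 2 hkn
  have hterm : ∀ T ∈ Finset.univ.powersetCard k,
      ((Finset.univ : Finset (Finset (ED n))).filter (fun E => cliquePat T ⊆ E)).card
        = 2 ^ (Fintype.card (ED n) - k.choose 2) := by
    intro T hT
    rw [Finset.mem_powersetCard] at hT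
    rw [count_supersets, card_cliquePat, hT.2]
  rw [Finset.sum_congr rfl hterm, Finset.sum_const, Finset.card_powersetCard,
    Finset.card_univ, Fintype.card_fin, smul_eq_mul, mul_assoc, ← pow_add]
  congr 2
  omega

lemma sum_Xcnt_sq (k : ℕ) (hkn : 2 * k ≤ n) :
    (∑ E : Finset (ED n), (Xcnt k E) ^ 2) * 2 ^ (2 * k.choose 2)
      ≤ 2 ^ Fintype.card (ED n) * (2 ^ (k + k.choose 2) * (n.choose k) ^ 2) := by
  classical
  set M := Fintype.card (ED n) with hM
  set K := k.choose 2 with hK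
  have hsq : ∀ E : Finset (ED n), (Xcnt k E) ^ 2
      = ∑ T ∈ ((Finset.univ : Finset (Fin n)).powersetCard k), ∑ T' ∈ ((Finset.univ : Finset (Fin n)).powersetCard k),
          if cliquePat T ∪ cliquePat T' ⊆ E then 1 else 0 := by
    intro E
    rw [Xcnt, sq, Finset.card_filter, Finset.sum_mul_sum]
    refine Finset.sum_congr rfl (fun T _ => Finset.sum_congr rfl (fun T' _ => ?_))
    by_cases h1 : cliquePat T ⊆ E <;> by_cases h2 : cliquePat T' ⊆ E <;>
      simp [h1, h2, Finset.union_subset_iff]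
  have hswap : (∑ E : Finset (ED n), (Xcnt k E) ^ 2)
      = ∑ T ∈ ((Finset.univ : Finset (Fin n)).powersetCard k), ∑ T' ∈ ((Finset.univ : Finset (Fin n)).powersetCard k),
          2 ^ (M - (cliquePat T ∪ cliquePat T').card) := by
    simp only [hsq]
    rw [Finset.sum_comm]
    refine Finset.sum_congr rfl (fun T _ => ?_)
    rw [Finset.sum_comm]
    refine Finset.sum_congr rfl (fun T' _ => ?_)
    rw [← Finset.card_filter, count_supersets]
  rw [hswap, Finset.sum_mul]
  have hTbnd : ∀ T ∈ ((Finset.univ : Finset (Fin n)).powersetCard k),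
      (∑ T' ∈ ((Finset.univ : Finset (Fin n)).powersetCard k), 2 ^ (M - (cliquePat T ∪ cliquePat T').card))
          * 2 ^ (2 * K)
        ≤ 2 ^ M * (2 ^ (k + K) * n.choose k) := by
    intro T hT
    rw [Finset.mem_powersetCard] at hT
    rw [Finset.sum_mul]
    have hterm : ∀ T' ∈ ((Finset.univ : Finset (Fin n)).powersetCard k),
        2 ^ (M - (cliquePat T ∪ cliquePat T').card) * 2 ^ (2 * K)
          = 2 ^ M * 2 ^ (((T ∩ T').card).choose 2) := by
      intro T' hT'
      rw [Finset.mem_powersetCard] at hT'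
      have hu : (cliquePat T ∪ cliquePat T').card + ((T ∩ T').card).choose 2 = 2 * K := by
        have := Finset.card_union_add_card_inter (cliquePat T) (cliquePat T')
        rw [cliquePat_inter, card_cliquePat, card_cliquePat, card_cliquePat,
          hT.2, hT'.2] at this
        omega
      have hle : (cliquePat T ∪ cliquePat T').card ≤ M := Finset.card_le_univ _
      rw [← pow_add, ← pow_add]
      congr 1
      omega
    rw [Finset.sum_congr rfl hterm, ← Finset.mul_sum]
    exact Nat.mul_le_mul_left _ (inner_bound hkn T hT.2)
  calc ∑ T ∈ ((Finset.univ : Finset (Fin n)).powersetCard k),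
        (∑ T' ∈ ((Finset.univ : Finset (Fin n)).powersetCard k), 2 ^ (M - (cliquePat T ∪ cliquePat T').card))
          * 2 ^ (2 * K)
      ≤ ∑ _T ∈ ((Finset.univ : Finset (Fin n)).powersetCard k), 2 ^ M * (2 ^ (k + K) * n.choose k) :=
        Finset.sum_le_sum hTbnd
    _ = n.choose k * (2 ^ M * (2 ^ (k + K) * n.choose k)) := by
        rw [Finset.sum_const, Finset.card_powersetCard, Finset.card_univ, Fintype.card_fin,
          smul_eq_mul]
    _ = 2 ^ M * (2 ^ (k + K) * (n.choose k) ^ 2) := by ring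
lemma pow_aux : (100:ℕ)^100 ≤ 2^85 * 73^73 * 27^27 := by norm_num

lemma sixteen_bound : ∀ l : ℕ, 12 ≤ l → 16 * l^2 ≤ 2^l := by
  intro l hl
  induction l, hl using Nat.le_induction with
  | base => norm_num
  | succ m hm ih =>
    have h2 : 16 * (m+1)^2 ≤ 2 * (16 * m^2) := by nlinarith
    calc 16 * (m+1)^2 ≤ 2 * (16 * m^2) := h2
      _ ≤ 2 * 2^m := by omega
      _ = 2^(m+1) := by rw [pow_succ]; ring

lemma pow_le_choose_mul {n k : ℕ} (h : 2 * k ≤ n) :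
    n ^ k ≤ (2 * k) ^ k * n.choose k := by
  have h1 : n ^ k ≤ (2 * (n + 1 - k)) ^ k :=
    Nat.pow_le_pow_left (by omega) k
  have h2 : (n + 1 - k) ^ k ≤ n.descFactorial k := Nat.pow_sub_le_descFactorial n k
  have h3 : n.descFactorial k = k.factorial * n.choose k :=
    Nat.descFactorial_eq_factorial_mul_choose n k
  have h4 : k.factorial ≤ k ^ k := Nat.factorial_le_pow k
  calc n ^ k ≤ (2 * (n + 1 - k)) ^ k := h1
    _ = 2 ^ k * (n + 1 - k) ^ k := by rw [mul_pow]
    _ ≤ 2 ^ k * (k.factorial * n.choose k) := by rw [← h3]; exact Nat.mul_le_mul_left _ h2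
    _ ≤ 2 ^ k * (k ^ k * n.choose k) :=
        Nat.mul_le_mul_left _ (Nat.mul_le_mul_right _ h4)
    _ = (2 * k) ^ k * n.choose k := by rw [mul_pow]; ring

lemma choose_pow_bound {M i : ℕ} (h : 100 * i ≤ 27 * M) :
    (M.choose i) ^ 100 ≤ 2 ^ (85 * M) := by
  rcases Nat.lt_or_ge M i with hMi | hiM
  · rw [Nat.choose_eq_zero_of_lt hMi]
    positivity
  · have hbin : 27 ^ i * 73 ^ (M - i) * M.choose i ≤ 100 ^ M := by
      calc 27 ^ i * 73 ^ (M - i) * M.choose i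
          ≤ ∑ j ∈ Finset.range (M+1), 27 ^ j * 73 ^ (M - j) * M.choose j :=
            Finset.single_le_sum (f := fun j => 27 ^ j * 73 ^ (M - j) * M.choose j)
              (fun j _ => Nat.zero_le _) (Finset.mem_range.mpr (by omega))
        _ = (27 + 73) ^ M := (add_pow 27 73 M).symm
        _ = 100 ^ M := by norm_num
    have h100 : (27 ^ (100*i)) * (73 ^ (100*(M-i))) * (M.choose i)^100
        ≤ (100:ℕ) ^ (100*M) := by
      calc (27 ^ (100*i)) * (73 ^ (100*(M-i))) * (M.choose i)^100
          = (27 ^ i * 73 ^ (M - i) * M.choose i)^100 := by ring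
        _ ≤ ((100:ℕ) ^ M)^100 := Nat.pow_le_pow_left hbin 100
        _ = (100:ℕ) ^ (100*M) := by rw [← pow_mul, mul_comm]
    have h2 : 73 ^ (73*M) * 27 ^ (27*M) ≤ 27 ^ (100*i) * 73 ^ (100*(M-i)) := by
      have e1 : 100*(M-i) = 73*M + (27*M - 100*i) := by omega
      have e2 : 100*i + (27*M - 100*i) = 27*M := by omega
      calc 73 ^ (73*M) * 27 ^ (27*M)
          = 73 ^ (73*M) * (27 ^ (100*i) * 27 ^ (27*M - 100*i)) := by rw [← pow_add, e2]
        _ ≤ 73 ^ (73*M) * (27 ^ (100*i) * 73 ^ (27*M - 100*i)) := by gcongr <;> norm_num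
        _ = 27 ^ (100*i) * 73 ^ (100*(M-i)) := by rw [e1, pow_add]; ring
    have h3 : (100:ℕ) ^ (100*M) ≤ 2 ^ (85*M) * (73 ^ (73*M) * 27 ^ (27*M)) := by
      calc (100:ℕ) ^ (100*M) = ((100:ℕ)^100)^M := by rw [← pow_mul]
        _ ≤ (2^85 * 73^73 * 27^27)^M := Nat.pow_le_pow_left pow_aux M
        _ = 2 ^ (85*M) * (73 ^ (73*M) * 27 ^ (27*M)) := by
            rw [mul_pow, mul_pow, ← pow_mul, ← pow_mul, ← pow_mul]; ring
    have h4 : (M.choose i)^100 * (73 ^ (73*M) * 27 ^ (27*M))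
        ≤ 2 ^ (85*M) * (73 ^ (73*M) * 27 ^ (27*M)) := by
      calc (M.choose i)^100 * (73 ^ (73*M) * 27 ^ (27*M))
          ≤ (M.choose i)^100 * (27 ^ (100*i) * 73 ^ (100*(M-i))) :=
            Nat.mul_le_mul_left _ h2
        _ = (27 ^ (100*i)) * (73 ^ (100*(M-i))) * (M.choose i)^100 := by ring
        _ ≤ (100:ℕ) ^ (100*M) := h100
        _ ≤ _ := h3
    exact Nat.le_of_mul_le_mul_right h4 (by positivity)

lemma choose_le_2pow {M i : ℕ} (h : 100 * i ≤ 27 * M) :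
    M.choose i ≤ 2 ^ (85 * M / 100 + 1) := by
  have h1 := choose_pow_bound h
  have h2 : (2:ℕ) ^ (85*M) ≤ (2 ^ (85*M/100 + 1))^100 := by
    rw [← pow_mul]
    exact Nat.pow_le_pow_right (by norm_num) (by omega)
  exact (Nat.pow_le_pow_iff_left (by norm_num)).mp (h1.trans h2)

lemma bad1_card (t₀ : ℕ) (h : 100 * t₀ ≤ 27 * Fintype.card (ED n) + 100) :
    ((Finset.univ : Finset (Finset (ED n))).filter (fun E => E.card < t₀)).card
      ≤ t₀ * 2 ^ (85 * Fintype.card (ED n) / 100 + 1) := by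
  classical
  have hsub : ((Finset.univ : Finset (Finset (ED n))).filter (fun E => E.card < t₀))
      ⊆ (Finset.range t₀).biUnion
          (fun i => (Finset.univ : Finset (ED n)).powersetCard i) := by
    intro E hE
    rw [Finset.mem_filter] at hE
    rw [Finset.mem_biUnion]
    exact ⟨E.card, Finset.mem_range.mpr hE.2,
      Finset.mem_powersetCard.mpr ⟨Finset.subset_univ _, rfl⟩⟩
  calc ((Finset.univ : Finset (Finset (ED n))).filter (fun E => E.card < t₀)).card
      ≤ ∑ i ∈ Finset.range t₀, ((Finset.univ : Finset (ED n)).powersetCard i).card :=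
        (Finset.card_le_card hsub).trans (Finset.card_biUnion_le)
    _ ≤ ∑ _i ∈ Finset.range t₀, 2 ^ (85 * Fintype.card (ED n) / 100 + 1) := by
        refine Finset.sum_le_sum (fun i hi => ?_)
        rw [Finset.card_powersetCard, Finset.card_univ]
        refine choose_le_2pow ?_
        rw [Finset.mem_range] at hi
        omega
    _ = t₀ * 2 ^ (85 * Fintype.card (ED n) / 100 + 1) := by
        rw [Finset.sum_const, Finset.card_range, smul_eq_mul]

lemma bad2_card (a₀ : ℕ) :
    ((Finset.univ : Finset (Finset (ED n))).filter
        (fun E => ∃ A B : Finset (Fin n), A.card = a₀ ∧ B.card = a₀ ∧ Disjoint A B ∧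
          bicPat A B ⊆ E)).card
      ≤ n ^ a₀ * n ^ a₀ * 2 ^ (Fintype.card (ED n) - a₀ * a₀) := by
  classical
  set S := (((Finset.univ : Finset (Fin n)).powersetCard a₀) ×ˢ
      ((Finset.univ : Finset (Fin n)).powersetCard a₀)).filter
      (fun p => Disjoint p.1 p.2) with hS
  have hsub : ((Finset.univ : Finset (Finset (ED n))).filter
      (fun E => ∃ A B : Finset (Fin n), A.card = a₀ ∧ B.card = a₀ ∧ Disjoint A B ∧
        bicPat A B ⊆ E))
      ⊆ S.biUnion (fun p =>
          (Finset.univ : Finset (Finset (ED n))).filter (fun E => bicPat p.1 p.2 ⊆ E)) := by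
    intro E hE
    rw [Finset.mem_filter] at hE
    obtain ⟨-, A, B, hA, hB, hdisj, hpat⟩ := hE
    rw [Finset.mem_biUnion]
    refine ⟨(A, B), ?_, ?_⟩
    · rw [hS, Finset.mem_filter, Finset.mem_product]
      exact ⟨⟨Finset.mem_powersetCard.mpr ⟨Finset.subset_univ _, hA⟩,
        Finset.mem_powersetCard.mpr ⟨Finset.subset_univ _, hB⟩⟩, hdisj⟩
    · rw [Finset.mem_filter]
      exact ⟨Finset.mem_univ _, hpat⟩
  have hcard : ∀ p ∈ S,
      ((Finset.univ : Finset (Finset (ED n))).filter (fun E => bicPat p.1 p.2 ⊆ E)).card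
        = 2 ^ (Fintype.card (ED n) - a₀ * a₀) := by
    rintro ⟨A, B⟩ hp
    rw [hS, Finset.mem_filter, Finset.mem_product, Finset.mem_powersetCard,
      Finset.mem_powersetCard] at hp
    rw [count_supersets, card_bicPat hp.2, hp.1.1.2, hp.1.2.2]
  have hScard : S.card ≤ n ^ a₀ * n ^ a₀ := by
    calc S.card ≤ ((((Finset.univ : Finset (Fin n)).powersetCard a₀) ×ˢ
          ((Finset.univ : Finset (Fin n)).powersetCard a₀))).card := Finset.card_filter_le _ _
      _ = n.choose a₀ * n.choose a₀ := by
          rw [Finset.card_product, Finset.card_powersetCard, Finset.card_univ, Fintype.card_fin]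
      _ ≤ n ^ a₀ * n ^ a₀ :=
          Nat.mul_le_mul (Nat.choose_le_pow _ _) (Nat.choose_le_pow _ _)
  calc ((Finset.univ : Finset (Finset (ED n))).filter
        (fun E => ∃ A B : Finset (Fin n), A.card = a₀ ∧ B.card = a₀ ∧ Disjoint A B ∧
          bicPat A B ⊆ E)).card
      ≤ ∑ p ∈ S, ((Finset.univ : Finset (Finset (ED n))).filter
          (fun E => bicPat p.1 p.2 ⊆ E)).card :=
        (Finset.card_le_card hsub).trans Finset.card_biUnion_le
    _ = S.card * 2 ^ (Fintype.card (ED n) - a₀ * a₀) := by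
        rw [Finset.sum_congr rfl hcard, Finset.sum_const, smul_eq_mul]
    _ ≤ n ^ a₀ * n ^ a₀ * 2 ^ (Fintype.card (ED n) - a₀ * a₀) :=
        Nat.mul_le_mul_right _ hScard



set_option maxHeartbeats 800000 in
lemma abstract_PZ {ι : Type*} [Fintype ι] (X : ι → ℕ) (C M K k' : ℕ) (hC : 0 < C)
    (hcard : Fintype.card ι = 2 ^ M)
    (hS1 : (∑ i, X i) * 2 ^ K = C * 2 ^ M)
    (hS2 : (∑ i, (X i) ^ 2) * 2 ^ (2 * K) ≤ 2 ^ M * (2 ^ (k' + K) * C ^ 2)) :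
    2 ^ M ≤ (Finset.univ.filter (fun i => C * 2 ^ M ≤ 2 ^ (K + M + 1) * X i)).card
      * 2 ^ (k' + K + 2) := by
  classical
  set A := Finset.univ.filter (fun i => C * 2 ^ M ≤ 2 ^ (K + M + 1) * X i) with hA
  set B := Finset.univ.filter (fun i => ¬ (C * 2 ^ M ≤ 2 ^ (K + M + 1) * X i)) with hB
  set T : ℝ := ∑ i ∈ A, (X i : ℝ) with hT
  set U : ℝ := ∑ i ∈ B, (X i : ℝ) with hU
  have hS1R : (T + U) * 2 ^ K = (C : ℝ) * 2 ^ M := by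
    have h2 : T + U = ∑ i, (X i : ℝ) := Finset.sum_filter_add_sum_filter_not _ _ _
    have h3 := congrArg (fun x : ℕ => (x : ℝ)) hS1
    push_cast at h3
    rw [h2]
    exact h3
  have hTnn : 0 ≤ T := Finset.sum_nonneg (fun i _ => by positivity)
  have hUnn : 0 ≤ U := Finset.sum_nonneg (fun i _ => by positivity)
  have hU2 : U * 2 ^ (K + M + 1) ≤ 2 ^ M * ((C : ℝ) * 2 ^ M) := by
    rw [hU, Finset.sum_mul]
    have hBcard : (B.card : ℝ) ≤ 2 ^ M := by
      have h3 : B.card ≤ 2 ^ M := by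
        calc B.card ≤ (Finset.univ : Finset ι).card := Finset.card_filter_le _ _
          _ = 2 ^ M := by rw [Finset.card_univ, hcard]
      exact_mod_cast h3
    calc ∑ i ∈ B, (X i : ℝ) * 2 ^ (K + M + 1)
        ≤ ∑ _i ∈ B, (C : ℝ) * 2 ^ M := by
          refine Finset.sum_le_sum (fun i hi => ?_)
          rw [hB, Finset.mem_filter] at hi
          have h4 := le_of_lt (Nat.lt_of_not_le hi.2)
          have h5 := (Nat.cast_le (α := ℝ)).mpr h4
          push_cast at h5
          linarith
      _ = B.card * ((C : ℝ) * 2 ^ M) := by rw [Finset.sum_const, nsmul_eq_mul]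
      _ ≤ 2 ^ M * ((C : ℝ) * 2 ^ M) :=
          mul_le_mul_of_nonneg_right hBcard (by positivity)
  have hTlow : (C : ℝ) * 2 ^ M ≤ 2 ^ (K + 1) * T := by
    have e1 : (2:ℝ) ^ (K + M + 1) = 2 ^ K * 2 ^ M * 2 := by
      rw [pow_add, pow_add, pow_one]
    have hp : (0:ℝ) < 2 ^ M := by positivity
    have e3 : 2 * (U * 2 ^ K) ≤ (C : ℝ) * 2 ^ M := by
      have e2 : 2 * (U * 2 ^ K) * 2 ^ M ≤ ((C : ℝ) * 2 ^ M) * 2 ^ M := by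
        calc 2 * (U * 2 ^ K) * 2 ^ M = U * 2 ^ (K + M + 1) := by rw [e1]; ring
          _ ≤ 2 ^ M * ((C : ℝ) * 2 ^ M) := hU2
          _ = ((C : ℝ) * 2 ^ M) * 2 ^ M := by ring
      exact le_of_mul_le_mul_right e2 hp
    have e4 : (2:ℝ) ^ (K + 1) = 2 ^ K * 2 := by rw [pow_add, pow_one]
    nlinarith [hS1R]
  set SA : ℝ := ∑ i ∈ A, (X i : ℝ) ^ 2 with hSA
  set S2R : ℝ := ∑ i, (X i : ℝ) ^ 2 with hS2R
  have hCS : T ^ 2 ≤ A.card * SA := sq_sum_le_card_mul_sum_sq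
  have hSAle : SA ≤ S2R :=
    Finset.sum_le_sum_of_subset_of_nonneg (Finset.filter_subset _ _)
      (fun i _ _ => by positivity)
  have hS2bnd : S2R * 2 ^ (2 * K) ≤ 2 ^ M * (2 ^ (k' + K) * (C : ℝ) ^ 2) := by
    have h7 := (Nat.cast_le (α := ℝ)).mpr hS2
    push_cast at h7
    exact h7
  have hAnn : (0:ℝ) ≤ A.card := by positivity
  have C1 : (C : ℝ) ^ 2 * 2 ^ (M + M) * 2 ^ (2 * K)
      ≤ A.card * (2 ^ (2 * K + 2) * (2 ^ M * (2 ^ (k' + K) * (C : ℝ) ^ 2))) := by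
    calc (C : ℝ) ^ 2 * 2 ^ (M + M) * 2 ^ (2 * K)
        = ((C : ℝ) * 2 ^ M) ^ 2 * 2 ^ (2 * K) := by rw [pow_add]; ring
      _ ≤ (2 ^ (K + 1) * T) ^ 2 * 2 ^ (2 * K) := by
          refine mul_le_mul_of_nonneg_right ?_ (by positivity)
          exact pow_le_pow_left₀ (by positivity) hTlow 2
      _ = 2 ^ (2 * K + 2) * T ^ 2 * 2 ^ (2 * K) := by
          rw [mul_pow, ← pow_mul]
          ring_nf
      _ ≤ 2 ^ (2 * K + 2) * (A.card * SA) * 2 ^ (2 * K) :=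
          mul_le_mul_of_nonneg_right
            (mul_le_mul_of_nonneg_left hCS (by positivity)) (by positivity)
      _ = 2 ^ (2 * K + 2) * A.card * (SA * 2 ^ (2 * K)) := by ring
      _ ≤ 2 ^ (2 * K + 2) * A.card * (S2R * 2 ^ (2 * K)) := by
          refine mul_le_mul_of_nonneg_left
            (mul_le_mul_of_nonneg_right hSAle (by positivity)) ?_
          positivity
      _ ≤ 2 ^ (2 * K + 2) * A.card * (2 ^ M * (2 ^ (k' + K) * (C : ℝ) ^ 2)) := by
          refine mul_le_mul_of_nonneg_left hS2bnd ?_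
          positivity
      _ = A.card * (2 ^ (2 * K + 2) * (2 ^ M * (2 ^ (k' + K) * (C : ℝ) ^ 2))) := by ring
  have hfin : (2:ℝ) ^ M ≤ A.card * 2 ^ (k' + K + 2) := by
    have hF : (0:ℝ) < (C : ℝ) ^ 2 * 2 ^ M * 2 ^ (2 * K) := by positivity
    refine le_of_mul_le_mul_left ?_ hF
    calc (C : ℝ) ^ 2 * 2 ^ M * 2 ^ (2 * K) * 2 ^ M
        = (C : ℝ) ^ 2 * 2 ^ (M + M) * 2 ^ (2 * K) := by rw [pow_add]; ring
      _ ≤ A.card * (2 ^ (2 * K + 2) * (2 ^ M * (2 ^ (k' + K) * (C : ℝ) ^ 2))) := C1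
      _ = (C : ℝ) ^ 2 * 2 ^ M * 2 ^ (2 * K) * (A.card * 2 ^ (k' + K + 2)) := by
          rw [pow_add, pow_add, pow_add, pow_add]
          ring
  exact_mod_cast hfin


lemma logb_ge_log {n l : ℕ} (h : 2 ^ l ≤ n) : (l : ℝ) ≤ Real.logb 2 n := by
  have h1 : ((2:ℝ)) ^ l ≤ (n : ℝ) := by exact_mod_cast h
  have h2 : Real.logb 2 ((2:ℝ) ^ l) ≤ Real.logb 2 n :=
    Real.logb_le_logb_of_le (by norm_num) (by positivity) h1
  rwa [Real.logb_pow, Real.logb_self_eq_one (by norm_num), mul_one] at h2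

lemma logb_le_log {n l : ℕ} (hn : 0 < n) (h : n ≤ 2 ^ l) : Real.logb 2 n ≤ (l : ℝ) := by
  have h1 : (n : ℝ) ≤ ((2:ℝ)) ^ l := by exact_mod_cast h
  have h2 : Real.logb 2 (n : ℝ) ≤ Real.logb 2 ((2:ℝ) ^ l) :=
    Real.logb_le_logb_of_le (by norm_num) (by exact_mod_cast hn) h1
  rwa [Real.logb_pow, Real.logb_self_eq_one (by norm_num), mul_one] at h2

set_option maxHeartbeats 1000000 in
/-- for every `k` there is `c_k > 0` such that for all sufficiently large `n`
there is a graph `G` on `n` vertices with (1) at least `n²/8` edges, (2) no complete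
bipartite subgraph `K_{a,a}` with `a ≥ 3·log₂ n`, and (3) at least `c_k·n^k` many
`k`-cliques. -/
theorem stmt_4 (k : ℕ) :
    ∃ c : ℝ, 0 < c ∧ ∃ N : ℕ, ∀ n : ℕ, N ≤ n → ∃ G : SimpleGraph (Fin n),
      ((n : ℝ) ^ 2 / 8 ≤ (G.edgeSet.ncard : ℝ)) ∧
      (∀ a : ℕ, 3 * Real.logb 2 n ≤ (a : ℝ) →
        ∀ A B : Finset (Fin n), Disjoint A B → A.card = a → B.card = a →
          ¬ (∀ u ∈ A, ∀ v ∈ B, G.Adj u v)) ∧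
      (c * (n : ℝ) ^ k ≤ ({t : Finset (Fin n) | G.IsNClique k t}.ncard : ℝ)) := by
  classical
  set K := k.choose 2 with hKdef
  set L := k + K + 100 with hLdef
  refine ⟨((2:ℝ) ^ (K + 1) * (2 * (k + 1)) ^ k)⁻¹, by positivity, 2 ^ L, ?_⟩
  intro n hn
  -- basic size facts
  set l := Nat.log 2 n with hldef
  have hn0 : 0 < n := lt_of_lt_of_le (Nat.two_pow_pos L) hn
  have hlL : L ≤ l := by
    have h1 := Nat.log_mono_right (b := 2) hn
    rwa [Nat.log_pow (by norm_num)] at h1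
  have hl2 : 2 ^ l ≤ n := Nat.pow_log_le_self 2 (by omega)
  have hn2l : n < 2 ^ (l + 1) := Nat.lt_pow_succ_log_self (by norm_num) n
  have h16 : 16 * l ^ 2 ≤ 2 ^ l := sixteen_bound l (by omega)
  have hl100 : 100 ≤ l := by omega
  have hkl : k + K ≤ l := by omega
  -- n is large
  have hn14 : 14 ≤ n := le_trans (le_trans (by norm_num) (Nat.pow_le_pow_right
    (by norm_num) (show 4 ≤ l by omega))) hl2
  have hlsq_n : 16 * l ^ 2 ≤ n := le_trans h16 hl2
  set M := Fintype.card (ED n) with hMdef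
  have hMval : M = n.choose 2 := card_ED
  have hM2 : 2 * M = n * (n - 1) := by
    rw [hMval, Nat.choose_two_right]
    rw [Nat.mul_div_cancel']
    have h1 : Even ((n - 1) * (n - 1 + 1)) := Nat.even_mul_succ_self (n - 1)
    have h2 : n - 1 + 1 = n := by omega
    rw [h2] at h1
    rw [mul_comm] at h1
    exact h1.two_dvd
  have hnM : n ≤ M := by
    have h1 : n * 2 ≤ n * (n - 1) := Nat.mul_le_mul_left n (by omega)
    omega
  have hM2' : 2 * M + n = n ^ 2 := by
    have h2 : n * (n - 1) + n = n ^ 2 := by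
      calc n * (n - 1) + n = n * ((n - 1) + 1) := by ring
        _ = n * n := by rw [Nat.sub_add_cancel hn0]
        _ = n ^ 2 := (sq n).symm
    omega
  have hsqn : 14 * n ≤ n ^ 2 := by nlinarith [hn14]
  -- parameters
  set t₀ := n ^ 2 / 8 + 1 with ht₀def
  set a₀ := ⌈3 * Real.logb 2 n⌉₊ with ha₀def
  -- a₀ facts
  have ha3 : 3 * l ≤ a₀ := by
    have h1 : ((3 * l : ℕ) : ℝ) ≤ 3 * Real.logb 2 n := by
      push_cast
      have := logb_ge_log hl2
      linarith
    have h2 : ((3 * l : ℕ) : ℝ) ≤ (a₀ : ℝ) := le_trans h1 (Nat.le_ceil _)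
    exact_mod_cast h2
  have ha4 : a₀ ≤ 4 * l := by
    rw [ha₀def]
    refine Nat.ceil_le.mpr ?_
    have h1 := logb_le_log hn0 (le_of_lt hn2l)
    push_cast at h1
    push_cast
    have : (3:ℝ) * (l + 1) ≤ 4 * l := by
      have : (100:ℝ) ≤ l := by exact_mod_cast hl100
      linarith
    linarith
  have ha₀pos : 0 < a₀ := by omega
  have haM : a₀ * a₀ ≤ M := by
    calc a₀ * a₀ ≤ (4 * l) * (4 * l) := Nat.mul_le_mul ha4 ha4
      _ = 16 * l ^ 2 := by ring
      _ ≤ n := hlsq_n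
      _ ≤ M := hnM
  have hstar : 2 * ((l + 1) * a₀) + (k + K + 4) ≤ a₀ * a₀ := by
    have h1 : 3 * l * a₀ ≤ a₀ * a₀ := Nat.mul_le_mul_right a₀ ha3
    nlinarith [ha3, hlL, hl100]
  -- edge count parameter facts
  have h8 : n ^ 2 / 8 * 8 ≤ n ^ 2 := Nat.div_mul_le_self _ _
  have ht27 : 100 * t₀ ≤ 27 * M + 100 := by
    rw [ht₀def]
    have h9 : 100 * (n ^ 2 / 8) ≤ 27 * M := by omega
    omega
  have hMbig : k + K + 4 ≤ M := by nlinarith [hkl, hlsq_n, hnM, hl100]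
  -- bad1 bound
  have hb1exp : t₀ * 2 ^ (85 * M / 100 + 1) ≤ 2 ^ (M - (k + K + 4)) := by
    have ht₀n2 : t₀ ≤ n ^ 2 := by
      have : 196 ≤ n ^ 2 := by nlinarith [hn14]
      omega
    have hn2pow : n ^ 2 ≤ 2 ^ (2 * l + 2) := by
      calc n ^ 2 ≤ (2 ^ (l + 1)) ^ 2 := Nat.pow_le_pow_left (le_of_lt hn2l) 2
        _ = 2 ^ (2 * l + 2) := by rw [← pow_mul]; congr 1; ring
    have hdiv : 85 * M / 100 * 100 ≤ 85 * M := Nat.div_mul_le_self _ _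
    have h15 : 100 * (2 * l + 7 + k + K) ≤ 15 * M := by
      have h151 : 100 * (2 * l + 7 + k + K) ≤ 300 * l + 700 := by omega
      have h152 : 300 * l + 700 ≤ 240 * l ^ 2 := by nlinarith [hl100]
      have h153 : 240 * l ^ 2 ≤ 15 * M := by nlinarith [hlsq_n, hnM]
      omega
    have hexp : (2 * l + 2) + (85 * M / 100 + 1) ≤ M - (k + K + 4) := by omega
    calc t₀ * 2 ^ (85 * M / 100 + 1) ≤ 2 ^ (2 * l + 2) * 2 ^ (85 * M / 100 + 1) :=
          Nat.mul_le_mul_right _ (le_trans ht₀n2 hn2pow)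
      _ = 2 ^ ((2 * l + 2) + (85 * M / 100 + 1)) := by rw [← pow_add]
      _ ≤ 2 ^ (M - (k + K + 4)) := Nat.pow_le_pow_right (by norm_num) hexp
  -- bad2 bound
  have hb2exp : n ^ a₀ * n ^ a₀ * 2 ^ (M - a₀ * a₀) ≤ 2 ^ (M - (k + K + 4)) := by
    have hnpow : n ^ a₀ ≤ 2 ^ ((l + 1) * a₀) := by
      calc n ^ a₀ ≤ (2 ^ (l + 1)) ^ a₀ := Nat.pow_le_pow_left (le_of_lt hn2l) a₀
        _ = 2 ^ ((l + 1) * a₀) := by rw [← pow_mul]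
    have hexp : ((l + 1) * a₀) + ((l + 1) * a₀) + (M - a₀ * a₀) ≤ M - (k + K + 4) := by
      omega
    calc n ^ a₀ * n ^ a₀ * 2 ^ (M - a₀ * a₀)
        ≤ 2 ^ ((l + 1) * a₀) * 2 ^ ((l + 1) * a₀) * 2 ^ (M - a₀ * a₀) :=
          Nat.mul_le_mul (Nat.mul_le_mul hnpow hnpow) le_rfl
      _ = 2 ^ (((l + 1) * a₀) + ((l + 1) * a₀) + (M - a₀ * a₀)) := by
          rw [← pow_add, ← pow_add]
      _ ≤ 2 ^ (M - (k + K + 4)) := Nat.pow_le_pow_right (by norm_num) hexp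
  -- the A set
  have hkn : 2 * k ≤ n := by
    have : 2 * k ≤ 2 * l := by omega
    have h2l : 2 * l ≤ 16 * l ^ 2 := by nlinarith [hl100]
    omega
  set A := ((Finset.univ : Finset (Finset (ED n))).filter
      (fun E => n.choose k * 2 ^ M ≤ 2 ^ (K + M + 1) * Xcnt k E)) with hAdef
  have hAc : 2 ^ M ≤ A.card * 2 ^ (k + K + 2) := by
    refine abstract_PZ (Xcnt k) (n.choose k) M K k (Nat.choose_pos (by omega)) ?_ ?_ ?_
    · rw [Fintype.card_finset]
    · exact sum_Xcnt k (by omega)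
    · exact sum_Xcnt_sq k hkn
  have hAcard : 2 ^ (M - (k + K + 2)) ≤ A.card := by
    have he : 2 ^ (M - (k + K + 2)) * 2 ^ (k + K + 2) = 2 ^ M := by
      rw [← pow_add]
      congr 1
      omega
    refine Nat.le_of_mul_le_mul_right ?_ (show 0 < 2 ^ (k + K + 2) by positivity)
    rw [he]
    exact hAc
  set bad1 := ((Finset.univ : Finset (Finset (ED n))).filter (fun E => E.card < t₀)) with hb1def
  set bad2 := ((Finset.univ : Finset (Finset (ED n))).filter
      (fun E => ∃ A B : Finset (Fin n), A.card = a₀ ∧ B.card = a₀ ∧ Disjoint A B ∧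
        bicPat A B ⊆ E)) with hb2def
  have hb1 : bad1.card ≤ 2 ^ (M - (k + K + 4)) := (bad1_card t₀ ht27).trans hb1exp
  have hb2 : bad2.card ≤ 2 ^ (M - (k + K + 4)) := (bad2_card a₀).trans hb2exp
  have hsum : bad1.card + bad2.card < A.card := by
    have h1 : bad1.card + bad2.card ≤ 2 ^ (M - (k + K + 4) + 1) := by
      rw [pow_succ]
      omega
    have h2 : 2 ^ (M - (k + K + 4) + 1) < 2 ^ (M - (k + K + 2)) := by
      refine Nat.pow_lt_pow_right (by norm_num) ?_
      omega
    omega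
  have hnonempty : (A \ (bad1 ∪ bad2)).Nonempty := by
    rw [← Finset.card_pos]
    have h1 := Finset.le_card_sdiff (bad1 ∪ bad2) A
    have h2 : (bad1 ∪ bad2).card ≤ bad1.card + bad2.card := Finset.card_union_le _ _
    omega
  obtain ⟨E, hE⟩ := hnonempty
  rw [Finset.mem_sdiff, Finset.mem_union] at hE
  obtain ⟨hEA, hEbad⟩ := hE
  push_neg at hEbad
  obtain ⟨hEb1, hEb2⟩ := hEbad
  refine ⟨graphOf E, ?_, ?_, ?_⟩
  · -- edge count
    rw [ncard_edgeSet]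
    have h1 : t₀ ≤ E.card := by
      rw [hb1def, Finset.mem_filter] at hEb1
      push_neg at hEb1
      exact hEb1 (Finset.mem_univ _)
    have h2 : n ^ 2 ≤ 8 * t₀ := by
      rw [ht₀def]
      omega
    have h3 : (n:ℝ) ^ 2 ≤ 8 * (E.card : ℝ) := by
      have h4 : n ^ 2 ≤ 8 * E.card := le_trans h2 (by omega)
      exact_mod_cast h4
    linarith
  · -- no biclique
    intro a ha AA BB hdisj hAAcard hBBcard hadj
    have haa : a₀ ≤ a := Nat.ceil_le.mpr ha
    obtain ⟨A2, hA2sub, hA2card⟩ := Finset.exists_subset_card_eq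
      (show a₀ ≤ AA.card by omega)
    obtain ⟨B2, hB2sub, hB2card⟩ := Finset.exists_subset_card_eq
      (show a₀ ≤ BB.card by omega)
    have hdisj2 : Disjoint A2 B2 :=
      Finset.disjoint_of_subset_left hA2sub (Finset.disjoint_of_subset_right hB2sub hdisj)
    apply hEb2
    rw [hb2def, Finset.mem_filter]
    refine ⟨Finset.mem_univ _, A2, B2, hA2card, hB2card, hdisj2, ?_⟩
    intro d hd
    rw [mem_bicPat hdisj2] at hd
    obtain ⟨u, v, hu, hv, hval⟩ := hd
    obtain ⟨d', hd', hval'⟩ := hadj u (hA2sub hu) v (hB2sub hv)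
    rwa [show d = d' from Subtype.ext (hval.trans hval'.symm)]
  · -- clique count
    rw [Xcnt_eq_ncard k E]
    rw [hAdef, Finset.mem_filter] at hEA
    have hXE := hEA.2
    have hXR : (n.choose k : ℝ) * 2 ^ M ≤ 2 ^ (K + M + 1) * (Xcnt k E : ℝ) := by
      exact_mod_cast hXE
    have hCh : (n.choose k : ℝ) ≤ 2 ^ (K + 1) * (Xcnt k E : ℝ) := by
      have hp : (0:ℝ) < 2 ^ M := by positivity
      have he : (2:ℝ) ^ (K + M + 1) = 2 ^ (K + 1) * 2 ^ M := by
        rw [← pow_add]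
        ring_nf
      refine le_of_mul_le_mul_right ?_ hp
      calc (n.choose k : ℝ) * 2 ^ M ≤ 2 ^ (K + M + 1) * (Xcnt k E : ℝ) := hXR
        _ = 2 ^ (K + 1) * (Xcnt k E : ℝ) * 2 ^ M := by rw [he]; ring
    have hnk : (n:ℝ) ^ k ≤ (2 * (k + 1) : ℝ) ^ k * (n.choose k : ℝ) := by
      have h1 : n ^ k ≤ (2 * k) ^ k * n.choose k := pow_le_choose_mul hkn
      have h2 : (2 * k) ^ k * n.choose k ≤ (2 * (k + 1)) ^ k * n.choose k :=
        Nat.mul_le_mul_right _ (Nat.pow_le_pow_left (by omega) k)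
      exact_mod_cast le_trans h1 h2
    have hD : (0:ℝ) < 2 ^ (K + 1) * (2 * ((k:ℝ) + 1)) ^ k := by positivity
    have hfinal : (n:ℝ) ^ k ≤ (2 ^ (K + 1) * (2 * ((k:ℝ) + 1)) ^ k) * (Xcnt k E : ℝ) := by
      calc (n:ℝ) ^ k ≤ (2 * ((k:ℝ) + 1)) ^ k * (n.choose k : ℝ) := by
            exact hnk
        _ ≤ (2 * ((k:ℝ) + 1)) ^ k * (2 ^ (K + 1) * (Xcnt k E : ℝ)) :=
            mul_le_mul_of_nonneg_left hCh (by positivity)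
        _ = (2 ^ (K + 1) * (2 * ((k:ℝ) + 1)) ^ k) * (Xcnt k E : ℝ) := by ring
    calc ((2:ℝ) ^ (K + 1) * (2 * ((k:ℕ) + 1) : ℝ) ^ k)⁻¹ * (n:ℝ) ^ k
        ≤ ((2:ℝ) ^ (K + 1) * (2 * ((k:ℝ) + 1)) ^ k)⁻¹ *
            ((2 ^ (K + 1) * (2 * ((k:ℝ) + 1)) ^ k) * (Xcnt k E : ℝ)) := by
          have : ((2:ℝ) * ((k:ℕ) + 1) : ℝ) ^ k = (2 * ((k:ℝ) + 1)) ^ k := by push_cast; ring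
          rw [this]
          exact mul_le_mul_of_nonneg_left hfinal (by positivity)
      _ = (Xcnt k E : ℝ) := by field_simp
end

section
/- Let A be an individualised σ-structure (every element a has unary colour P_a = {a}) with Gaifman graph G_A, and let H be a vertex-coloured graph whose colour classes P_a (a ∈ A) partition V(H). Define the structure φ(H) with universe V(H), the same colouring, and for each R ∈ σ of arity t, R^{φ(H)} = { (x_1,…,x_t) : for all i ≠ j with x_i ≠ x_j, {x_i,x_j} ∈ E(H) }. Then the set of homomorphisms from A to φ(H) equals the set of colour-preserving graph homomorphisms from the individualised Gaifman graph G_A^id to H. -/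
/-- A relational structure over signature `(σ, ar)` with universe `V`. -/
structure FinStructure (σ : Type) (ar : σ → ℕ) (V : Type) where
  rel : ∀ s : σ, Set (Fin (ar s) → V)

/-- `h` is a homomorphism of structures. -/
def StrHom {σ : Type} {ar : σ → ℕ} {V W : Type}
    (A : FinStructure σ ar V) (B : FinStructure σ ar W) (h : V → W) : Prop :=
  ∀ s : σ, ∀ t ∈ A.rel s, (h ∘ t) ∈ B.rel s

/-- The individualisation `A^id` of `A` over the signature `σ ⊕ V`. -/
def individualise {σ : Type} {ar : σ → ℕ} {V : Type} (A : FinStructure σ ar V) :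
    FinStructure (σ ⊕ V) (Sum.elim ar fun _ => 1) V where
  rel s := match s with
    | Sum.inl s => A.rel s
    | Sum.inr a => {t | t ⟨0, Nat.one_pos⟩ = a}

/-- The Gaifman graph of a structure. -/
def gaifman {σ : Type} {ar : σ → ℕ} {V : Type} (A : FinStructure σ ar V) :
    SimpleGraph V where
  Adj a b := a ≠ b ∧ ∃ s : σ, ∃ t ∈ A.rel s, (∃ i, t i = a) ∧ (∃ j, t j = b)
  symm := by
    constructor
    intro a b h
    obtain ⟨hne, s, t, ht, hi, hj⟩ := h
    exact ⟨hne.symm, s, t, ht, hj, hi⟩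
  loopless := ⟨fun a h => h.1 rfl⟩

/-- The structure `φ(H)` over `σ ⊕ V` built from a `V`-coloured graph `H` (with colour
classes `P`): universe `V(H)`, colouring as unary relations, and
`R^{φ(H)} = {(x_1,…,x_t) : x_i ≠ x_j → {x_i,x_j} ∈ E(H)}` for each `R ∈ σ`. -/
def phiStruct (σ : Type) (ar : σ → ℕ) {V W : Type} (H : SimpleGraph W) (P : V → Set W) :
    FinStructure (σ ⊕ V) (Sum.elim ar fun _ => 1) W where
  rel s := match s with
    | Sum.inl _ => {t | ∀ i j, t i ≠ t j → H.Adj (t i) (t j)}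
    | Sum.inr a => {t | t ⟨0, Nat.one_pos⟩ ∈ P a}

/-- for an individualised structure `A^id` and a `V`-partitioned graph `H`,
the homomorphisms from `A^id` to `φ(H)` are exactly the colour-preserving graph
homomorphisms from the individualised Gaifman graph `G_A^id` to `H`. -/
theorem stmt_13 {σ : Type} {ar : σ → ℕ} {V W : Type}
    (A : FinStructure σ ar V) (H : SimpleGraph W) (P : V → Set W)
    (hpart : ∀ w : W, ∃! a : V, w ∈ P a) :
    {h : V → W | StrHom (individualise A) (phiStruct σ ar H P) h} =
      {h : V → W | (∀ a : V, h a ∈ P a) ∧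
        ∀ a b : V, (gaifman A).Adj a b → H.Adj (h a) (h b)} := by
  ext h
  simp only [Set.mem_setOf_eq]
  constructor
  · intro hh
    have hcol : ∀ a : V, h a ∈ P a := by
      intro a
      have := hh (Sum.inr a) (fun _ => a) rfl
      exact this
    refine ⟨hcol, ?_⟩
    rintro a b ⟨hne, s, t, ht, ⟨i, hi⟩, ⟨j, hj⟩⟩
    have hst := hh (Sum.inl s) t ht
    have hab : h a ≠ h b := by
      intro he
      obtain ⟨c, _, hc⟩ := hpart (h a)
      exact hne ((hc a (hcol a)).trans (hc b (he ▸ hcol b)).symm)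
    have := hst i j (by simp only [Function.comp, hi, hj]; exact hab)
    simpa only [Function.comp, hi, hj] using this
  · rintro ⟨hcol, hadj⟩ s t ht
    cases s with
    | inl s =>
      intro i j hne
      have htij : t i ≠ t j := fun he => hne (congrArg h he)
      exact hadj _ _ ⟨htij, s, t, ht, ⟨i, rfl⟩, ⟨j, rfl⟩⟩
    | inr a =>
      simp only [individualise, Set.mem_setOf_eq] at ht
      show h (t _) ∈ P a
      rw [ht]
      exact hcol a
end

section
/- Let G_X, G_Y be graphs and M : V(G_Y) → 2^{V(G_X)} an almost-minor map. Let H be a V(G_X)-partitioned graph with colour classes P_x. Construct the V(G_Y)-partitioned graph H* with, for each y with M(y) = {x}, colour class {v_a^y : a ∈ P_x}, and for each y with M(y) = {x, x'} (x ≠ x'), colour class {v_{{a,b}}^y : a ∈ P_x, b ∈ P_{x'}}; edges between classes of adjacent y, y' are: a matching on the second index when M(y)=M(y'); edges of H when M(y)={x}, M(y')={x'} with {x,x'} ∈ E(G_X); complete bipartite when M(y)={x}, M(y')={x'}, x≠x', {x,x'} ∉ E(G_X); and {v_a^y, v_{{a,b}}^{y'}} for M(y)={x} ⊆ M(y')={x,x'}.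 Then the colour-preserving homomorphisms from G_Y^id to H* are exactly the maps h* with h ∈ Hom(G_X^id, H), where h*(y) = v_{h(x)}^y if M(y)={x} and h*(y) = v_{{h(x),h(x')}}^y if M(y)={x,x'}. -/
/-- `M : Y → 2^X` is an almost-minor map from `G_Y` to `G_X`. -/
def IsAlmostMinorMap {X Y : Type} [DecidableEq X]
    (GX : SimpleGraph X) (GY : SimpleGraph Y) (M : Y → Finset X) : Prop :=
  (∀ y, (M y).card = 1 ∨ (M y).card = 2) ∧
  (∀ x, ∃ y, M y = {x}) ∧
  (∀ x x', GX.Adj x x' → ∃ y y', GY.Adj y y' ∧ M y = {x} ∧ M y' = {x'}) ∧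
  (∀ x, (GY.induce {y : Y | x ∈ M y}).Connected) ∧
  (∀ y x x', x ≠ x' → M y = {x, x'} → ∀ y', GY.Adj y y' → M y' = {x} ∨ M y' = {x'})

/-- The `Y`-partitioned graph `H*` built from an `X`-partitioned graph `H` (colour classes
`P`) and an almost-minor map `M`.  A vertex `v_a^y` (for `M y = {x}`, `a ∈ P x`) is encoded
as `(y, {a})` and a vertex `v_{{a,b}}^y` (for `M y = {x,x'}`, `a ∈ P x`, `b ∈ P x'`) as
`(y, {a,b})`.  The edges between the colour classes of adjacent `y, y'` are: a matching on
the second index when `M y = M y' = {x}`; the edges of `H` when `M y = {x}`, `M y' = {x'}`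
with `{x,x'} ∈ E(G_X)`; complete bipartite when `x ≠ x'` and `{x,x'} ∉ E(G_X)`; and
`{v_a^y, v_{{a,b}}^{y'}}` when `M y = {x} ⊆ M y' = {x,x'}`. -/
def Hstar {X Y W : Type} [DecidableEq X] [DecidableEq W]
    (GX : SimpleGraph X) (GY : SimpleGraph Y) (H : SimpleGraph W)
    (M : Y → Finset X) (P : X → Set W) : SimpleGraph (Y × Finset W) :=
  SimpleGraph.fromRel (fun p q =>
    GY.Adj p.1 q.1 ∧ (
      (∃ x, M p.1 = {x} ∧ M q.1 = {x} ∧ ∃ a ∈ P x, p.2 = {a} ∧ q.2 = {a}) ∨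
      (∃ x x', M p.1 = {x} ∧ M q.1 = {x'} ∧ GX.Adj x x' ∧
        ∃ a ∈ P x, ∃ b ∈ P x', H.Adj a b ∧ p.2 = {a} ∧ q.2 = {b}) ∨
      (∃ x x', M p.1 = {x} ∧ M q.1 = {x'} ∧ x ≠ x' ∧ ¬ GX.Adj x x' ∧
        ∃ a ∈ P x, ∃ b ∈ P x', p.2 = {a} ∧ q.2 = {b}) ∨
      (∃ x x', x ≠ x' ∧ M p.1 = {x} ∧ M q.1 = ({x, x'} : Finset X) ∧
        ∃ a ∈ P x, ∃ b ∈ P x', p.2 = {a} ∧ q.2 = ({a, b} : Finset W))))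

/-- The colour class of `y` in `H*`. -/
def starClass {X Y W : Type} [DecidableEq X] [DecidableEq W]
    (M : Y → Finset X) (P : X → Set W) (y : Y) : Set (Y × Finset W) :=
  {p | p.1 = y ∧
    ((∃ x, M y = {x} ∧ ∃ a ∈ P x, p.2 = {a}) ∨
     (∃ x x', x ≠ x' ∧ M y = ({x, x'} : Finset X) ∧
       ∃ a ∈ P x, ∃ b ∈ P x', p.2 = ({a, b} : Finset W)))}

/-- A function that is constant along edges of a preconnected graph is constant. -/
lemma walk_const_aux {α β : Type*} {G : SimpleGraph α} (hG : G.Preconnected)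
    (f : α → β) (hf : ∀ u v, G.Adj u v → f u = f v) (u v : α) : f u = f v := by
  obtain ⟨w⟩ := hG u v
  induction w with
  | nil => rfl
  | cons h p ih => exact (hf _ _ h).trans ih

/-- the colour-preserving homomorphisms from `G_Y^id` to `H*` are exactly
the maps `h*` for colour-preserving homomorphisms `h` from `G_X^id` to `H`, where
`h* y = v_{h x}^y` if `M y = {x}` and `h* y = v_{{h x, h x'}}^y` if `M y = {x, x'}`
(both cases being `h* y = (y, (M y).image h)`). -/
theorem stmt_15 {X Y W : Type} [DecidableEq X] [DecidableEq W]
    (GX : SimpleGraph X) (GY : SimpleGraph Y) (M : Y → Finset X)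
    (hM : IsAlmostMinorMap GX GY M)
    (H : SimpleGraph W) (P : X → Set W) (hpart : ∀ w : W, ∃! x : X, w ∈ P x) :
    {g : Y → Y × Finset W | (∀ y, g y ∈ starClass M P y) ∧
        ∀ y y', GY.Adj y y' → (Hstar GX GY H M P).Adj (g y) (g y')} =
      {g : Y → Y × Finset W | ∃ h : X → W, (∀ x, h x ∈ P x) ∧
        (∀ x x', GX.Adj x x' → H.Adj (h x) (h x')) ∧
        g = fun y => (y, (M y).image h)} := by
  obtain ⟨hcard, hex, hedge, hconn, hbridge⟩ := hM
  have hPuniq : ∀ {w : W} {x x' : X}, w ∈ P x → w ∈ P x' → x = x' := by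
    intro w x x' hw hw'
    obtain ⟨z, _, hz⟩ := hpart w
    rw [hz x hw, hz x' hw']
  ext g
  simp only [Set.mem_setOf_eq]
  constructor
  · rintro ⟨hclass, hadj⟩
    have hf : ∀ y, ∃ f : X → W, (∀ x ∈ M y, f x ∈ P x) ∧ (g y).2 = (M y).image f := by
      intro y
      obtain ⟨-, hc⟩ := hclass y
      rcases hc with ⟨x, hMy, a, ha, h2⟩ | ⟨x, x', hne, hMy, a, ha, b, hb, h2⟩
      · refine ⟨fun _ => a, ?_, ?_⟩
        · intro z hz; rw [hMy, Finset.mem_singleton] at hz; subst hz; exact ha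
        · rw [hMy, Finset.image_singleton, h2]
      · refine ⟨fun z => if z = x then a else b, ?_, ?_⟩
        · intro z hz
          rw [hMy, Finset.mem_insert, Finset.mem_singleton] at hz
          rcases hz with rfl | rfl
          · simpa using ha
          · show (if z = x then a else b) ∈ P z
            rw [if_neg (Ne.symm hne)]; exact hb
        · rw [hMy, Finset.image_insert, Finset.image_singleton, h2,
            if_pos rfl, if_neg (Ne.symm hne)]
    choose f hfP hfim using hf
    have hval : ∀ y x, x ∈ M y → f y x ∈ (g y).2 := by
      intro y x hx; rw [hfim]; exact Finset.mem_image_of_mem _ hx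
    have hsing : ∀ y x a, x ∈ M y → (g y).2 = {a} → f y x = a := by
      intro y x a hx h2
      have := hval y x hx; rw [h2, Finset.mem_singleton] at this; exact this
    have key : ∀ y y' x, x ∈ M y → x ∈ M y' →
        ((∃ x₀, M y = {x₀} ∧ M y' = {x₀} ∧ ∃ a ∈ P x₀, (g y).2 = {a} ∧ (g y').2 = {a}) ∨
         (∃ x₀ x₁, M y = {x₀} ∧ M y' = {x₁} ∧ GX.Adj x₀ x₁ ∧
           ∃ a ∈ P x₀, ∃ b ∈ P x₁, H.Adj a b ∧ (g y).2 = {a} ∧ (g y').2 = {b}) ∨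
         (∃ x₀ x₁, M y = {x₀} ∧ M y' = {x₁} ∧ x₀ ≠ x₁ ∧ ¬ GX.Adj x₀ x₁ ∧
           ∃ a ∈ P x₀, ∃ b ∈ P x₁, (g y).2 = {a} ∧ (g y').2 = {b}) ∨
         (∃ x₀ x₁, x₀ ≠ x₁ ∧ M y = {x₀} ∧ M y' = ({x₀, x₁} : Finset X) ∧
           ∃ a ∈ P x₀, ∃ b ∈ P x₁, (g y).2 = {a} ∧ (g y').2 = ({a, b} : Finset W))) →
        f y x = f y' x := by
      intro y y' x hx hx' hA
      rcases hA with ⟨x₀, hMy, hMy', a, ha, h2, h2'⟩ |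
        ⟨x₀, x₁, hMy, hMy', hadjx, a, ha, b, hb, hab, h2, h2'⟩ |
        ⟨x₀, x₁, hMy, hMy', hne01, hnadj, a, ha, b, hb, h2, h2'⟩ |
        ⟨x₀, x₁, hne01, hMy, hMy', a, ha, b, hb, h2, h2'⟩
      · rw [hsing y x a hx h2, hsing y' x a hx' h2']
      · rw [hMy, Finset.mem_singleton] at hx
        rw [hMy', Finset.mem_singleton] at hx'
        exact absurd (hx ▸ hx' ▸ hadjx) (GX.irrefl)
      · rw [hMy, Finset.mem_singleton] at hx
        rw [hMy', Finset.mem_singleton] at hx'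
        exact absurd (hx ▸ hx' ▸ hne01) (fun hcc => hcc rfl)
      · rw [hMy, Finset.mem_singleton] at hx
        subst hx
        have h1 := hsing y x a (by rw [hMy]; exact Finset.mem_singleton_self x) h2
        have h3 := hval y' x hx'
        rw [h2', Finset.mem_insert, Finset.mem_singleton] at h3
        rcases h3 with h3 | h3
        · rw [h1, h3]
        · exfalso
          exact hne01 (hPuniq (h3 ▸ hfP y' x hx') hb)
    have hcons : ∀ y y', GY.Adj y y' → ∀ x, x ∈ M y → x ∈ M y' → f y x = f y' x := by
      intro y y' hyy' x hx hx'
      have hA := hadj y y' hyy'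
      simp only [Hstar, SimpleGraph.fromRel_adj] at hA
      obtain ⟨-, hA⟩ := hA
      rw [(hclass y).1, (hclass y').1] at hA
      rcases hA with ⟨-, hA⟩ | ⟨-, hA⟩
      · exact key y y' x hx hx' hA
      · exact (key y' y x hx' hx hA).symm
    choose y0 hy0 using hex
    set h : X → W := fun x => f (y0 x) x with hh
    have hconst : ∀ x y, x ∈ M y → f y x = h x := by
      intro x y hx
      have hxy0 : x ∈ M (y0 x) := by rw [hy0 x]; exact Finset.mem_singleton_self x
      exact walk_const_aux (hconn x).preconnected
        (fun u : {y : Y | x ∈ M y} => f u.1 x)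
        (fun u v huv => hcons u.1 v.1 huv x u.2 v.2) ⟨y, hx⟩ ⟨y0 x, hxy0⟩
    have hP' : ∀ x, h x ∈ P x := by
      intro x
      exact hfP (y0 x) x (by rw [hy0 x]; exact Finset.mem_singleton_self x)
    have singInj : ∀ {z : Y} {u v : X}, M z = {u} → M z = {v} → u = v := by
      intro z u v h1 h2
      exact Finset.singleton_injective (h1.symm.trans h2)
    have hE : ∀ x x', GX.Adj x x' → H.Adj (h x) (h x') := by
      intro x x' hxx'
      obtain ⟨y, y', hyy', hMy, hMy'⟩ := hedge x x' hxx'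
      have hx : x ∈ M y := by rw [hMy]; exact Finset.mem_singleton_self x
      have hx' : x' ∈ M y' := by rw [hMy']; exact Finset.mem_singleton_self x'
      have hA := hadj y y' hyy'
      simp only [Hstar, SimpleGraph.fromRel_adj] at hA
      obtain ⟨-, hA⟩ := hA
      rw [(hclass y).1, (hclass y').1] at hA
      rcases hA with ⟨-, hA⟩ | ⟨-, hA⟩
      · rcases hA with ⟨x₀, e1, e2, a, ha, h2, h2'⟩ |
          ⟨x₀, x₁, e1, e2, hadjx, a, ha, b, hb, hab, h2, h2'⟩ |
          ⟨x₀, x₁, e1, e2, hne01, hnadj, a, ha, b, hb, h2, h2'⟩ |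
          ⟨x₀, x₁, hne01, e1, e2, a, ha, b, hb, h2, h2'⟩
        · exact absurd ((singInj hMy e1).trans (singInj e2 hMy')) hxx'.ne
        · have ex : x₀ = x := singInj e1 hMy
          have ex' : x₁ = x' := singInj e2 hMy'
          have hya : f y x = a := hsing y x a hx h2
          have hyb : f y' x' = b := hsing y' x' b hx' h2'
          rw [← hconst x y hx, ← hconst x' y' hx', hya, hyb]
          exact hab
        · exact absurd (singInj e1 hMy ▸ singInj e2 hMy' ▸ hxx') hnadj
        · have h1 : x₀ = x' := by
            have : x₀ ∈ M y' := by rw [e2]; exact Finset.mem_insert_self _ _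
            rw [hMy', Finset.mem_singleton] at this; exact this
          have h2'' : x₁ = x' := by
            have : x₁ ∈ M y' := by
              rw [e2]; exact Finset.mem_insert_of_mem (Finset.mem_singleton_self _)
            rw [hMy', Finset.mem_singleton] at this; exact this
          exact absurd (h1.trans h2''.symm) hne01
      · rcases hA with ⟨x₀, e1, e2, a, ha, h2, h2'⟩ |
          ⟨x₀, x₁, e1, e2, hadjx, a, ha, b, hb, hab, h2, h2'⟩ |
          ⟨x₀, x₁, e1, e2, hne01, hnadj, a, ha, b, hb, h2, h2'⟩ |
          ⟨x₀, x₁, hne01, e1, e2, a, ha, b, hb, h2, h2'⟩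
        · exact absurd ((singInj hMy' e1).trans (singInj e2 hMy)).symm hxx'.ne
        · have hya : f y' x' = a := hsing y' x' a hx' h2
          have hyb : f y x = b := hsing y x b hx h2'
          rw [← hconst x y hx, ← hconst x' y' hx', hya, hyb]
          exact hab.symm
        · exact absurd (singInj e1 hMy' ▸ singInj e2 hMy ▸ hxx'.symm) hnadj
        · have h1 : x₀ = x := by
            have : x₀ ∈ M y := by rw [e2]; exact Finset.mem_insert_self _ _
            rw [hMy, Finset.mem_singleton] at this; exact this
          have h2'' : x₁ = x := by
            have : x₁ ∈ M y := by
              rw [e2]; exact Finset.mem_insert_of_mem (Finset.mem_singleton_self _)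
            rw [hMy, Finset.mem_singleton] at this; exact this
          exact absurd (h1.trans h2''.symm) hne01
    refine ⟨h, hP', hE, funext fun y => ?_⟩
    have e1 : (g y).1 = y := (hclass y).1
    have e2 : (g y).2 = (M y).image h := by
      rw [hfim y]
      exact Finset.image_congr (fun z hz => hconst z y hz)
    calc g y = ((g y).1, (g y).2) := rfl
    _ = (y, (M y).image h) := by rw [e1, e2]
  · rintro ⟨h, hP, hE, rfl⟩
    constructor
    · intro y
      refine ⟨rfl, ?_⟩
      rcases hcard y with hc | hc
      · obtain ⟨x, hx⟩ := Finset.card_eq_one.mp hc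
        exact Or.inl ⟨x, hx, h x, hP x, by simp only [hx, Finset.image_singleton]⟩
      · obtain ⟨x, x', hne, hx⟩ := Finset.card_eq_two.mp hc
        exact Or.inr ⟨x, x', hne, hx, h x, hP x, h x', hP x',
          by simp only [hx, Finset.image_insert, Finset.image_singleton]⟩
    · intro y y' hyy'
      simp only [Hstar, SimpleGraph.fromRel_adj]
      refine ⟨fun hc => hyy'.ne (congrArg Prod.fst hc), ?_⟩
      rcases hcard y with hc | hc
      · obtain ⟨x, hx⟩ := Finset.card_eq_one.mp hc
        rcases hcard y' with hc' | hc'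
        · obtain ⟨x', hx'⟩ := Finset.card_eq_one.mp hc'
          by_cases hxx : x = x'
          · subst hxx
            exact Or.inl ⟨hyy', Or.inl ⟨x, hx, hx', h x, hP x,
              by simp only [hx, Finset.image_singleton], by simp only [hx', Finset.image_singleton]⟩⟩
          · by_cases hGX : GX.Adj x x'
            · exact Or.inl ⟨hyy', Or.inr (Or.inl ⟨x, x', hx, hx', hGX, h x, hP x,
                h x', hP x', hE x x' hGX,
                by simp only [hx, Finset.image_singleton], by simp only [hx', Finset.image_singleton]⟩)⟩
            · exact Or.inl ⟨hyy', Or.inr (Or.inr (Or.inl ⟨x, x', hx, hx', hxx, hGX,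
                h x, hP x, h x', hP x',
                by simp only [hx, Finset.image_singleton], by simp only [hx', Finset.image_singleton]⟩))⟩
        · obtain ⟨x₁, x₂, hne12, hx'⟩ := Finset.card_eq_two.mp hc'
          rcases hbridge y' x₁ x₂ hne12 hx' y hyy'.symm with hy1 | hy1
          · exact Or.inl ⟨hyy', Or.inr (Or.inr (Or.inr ⟨x₁, x₂, hne12, hy1, hx',
              h x₁, hP x₁, h x₂, hP x₂,
              by simp only [hy1, Finset.image_singleton],
              by simp only [hx', Finset.image_insert, Finset.image_singleton]⟩))⟩
          · exact Or.inl ⟨hyy', Or.inr (Or.inr (Or.inr ⟨x₂, x₁, hne12.symm, hy1,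
              by simp only [hx']; exact Finset.pair_comm _ _,
              h x₂, hP x₂, h x₁, hP x₁,
              by simp only [hy1, Finset.image_singleton],
              by simp only [hx', Finset.image_insert, Finset.image_singleton]
                 exact Finset.pair_comm _ _⟩))⟩
      · obtain ⟨x₁, x₂, hne12, hx⟩ := Finset.card_eq_two.mp hc
        rcases hcard y' with hc' | hc'
        · rcases hbridge y x₁ x₂ hne12 hx y' hyy' with hy1 | hy1
          · exact Or.inr ⟨hyy'.symm, Or.inr (Or.inr (Or.inr ⟨x₁, x₂, hne12, hy1, hx,
              h x₁, hP x₁, h x₂, hP x₂,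
              by simp only [hy1, Finset.image_singleton],
              by simp only [hx, Finset.image_insert, Finset.image_singleton]⟩))⟩
          · exact Or.inr ⟨hyy'.symm, Or.inr (Or.inr (Or.inr ⟨x₂, x₁, hne12.symm, hy1,
              by simp only [hx]; exact Finset.pair_comm _ _,
              h x₂, hP x₂, h x₁, hP x₁,
              by simp only [hy1, Finset.image_singleton],
              by simp only [hx, Finset.image_insert, Finset.image_singleton]
                 exact Finset.pair_comm _ _⟩))⟩
        · rcases hbridge y x₁ x₂ hne12 hx y' hyy' with hy1 | hy1 <;>
            · rw [hy1] at hc'; simp at hc'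
end

section
/- Consider the 3-cycle K_3 on vertices x_1,x_2,x_3 and the 4-cycle C_4 on x_1,x_2,x_3,x_4 with edges {x_1,x_2},{x_2,x_3},{x_3,x_4},{x_4,x_1}. Let H be a {x_1,x_2,x_3}-partitioned graph and define the {x_1,x_2,x_3,x_4}-partitioned graph H' by P'_{x_i} = P_{x_i} for i ≤ 3, P'_{x_4} = { v̂ : v ∈ P_{x_1} } (a disjoint copy), with edges: {v, v̂} for v ∈ P_{x_1}; {v,w} for v ∈ P_{x_1}, w ∈ P_{x_2} with {v,w} ∈ E(H); {v,w} for v ∈ P_{x_2}, w ∈ P_{x_3} with {v,w} ∈ E(H); and {v, ŵ} for v ∈ P_{x_3}, w ∈ P_{x_1} with {v,w} ∈ E(H). Then a map h' : {x_1,x_2,x_3,x_4} → V(H') is a colour-preserving homomorphism from C_4 to H' if and only if h'(x_4) = (h'(x_1))^ and the restriction of h' to {x_1,x_2,x_3} is a colour-preserving homomorphism from K_3 to H. Consequently, the colour-preserving homomorphism set Hom(K_3^id, H) equals the projection to {x_1,x_2,x_3} of Hom(C_4^id, H'). -/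
/-- The `{x_1,x_2,x_3,x_4}`-partitioned graph `H'` built from a `{x_1,x_2,x_3}`-partitioned
graph `H` (colour classes `P 0, P 1, P 2`, corresponding to `x_1, x_2, x_3`): its vertex
type is `W ⊕ W`, `Sum.inl v` being the original vertex `v` and `Sum.inr v` the hatted copy
`v̂` of `v ∈ P x_1`.  Edges: `{v, v̂}` for `v ∈ P x_1`; `{v,w}` for `{v,w} ∈ E(H)` with
`v ∈ P x_1, w ∈ P x_2` or `v ∈ P x_2, w ∈ P x_3`; and `{v, ŵ}` for `v ∈ P x_3`,
`w ∈ P x_1`, `{v,w} ∈ E(H)`. -/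
def Hprime {W : Type} (H : SimpleGraph W) (P : Fin 3 → Set W) : SimpleGraph (W ⊕ W) :=
  SimpleGraph.fromRel (fun p q =>
    (∃ v ∈ P 0, p = Sum.inl v ∧ q = Sum.inr v) ∨
    (∃ v ∈ P 0, ∃ w ∈ P 1, H.Adj v w ∧ p = Sum.inl v ∧ q = Sum.inl w) ∨
    (∃ v ∈ P 1, ∃ w ∈ P 2, H.Adj v w ∧ p = Sum.inl v ∧ q = Sum.inl w) ∨
    (∃ v ∈ P 2, ∃ w ∈ P 0, H.Adj v w ∧ p = Sum.inl v ∧ q = Sum.inr w))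

/-- The colour classes of `H'`: `P'_{x_i} = P_{x_i}` for `i ≤ 3` (as original vertices) and
`P'_{x_4} = {v̂ : v ∈ P x_1}`. -/
def Pprime {W : Type} (P : Fin 3 → Set W) (i : Fin 4) : Set (W ⊕ W) :=
  if h : i.val < 3 then Sum.inl '' P ⟨i.val, h⟩ else Sum.inr '' P 0

lemma hp_inl_inl {W : Type} {H : SimpleGraph W} {P : Fin 3 → Set W} {a b : W}
    (h : (Hprime H P).Adj (Sum.inl a) (Sum.inl b)) : H.Adj a b := by
  obtain ⟨-, h | h⟩ := h <;>
  · rcases h with ⟨v, hv, e1, e2⟩ | ⟨v, hv, w, hw, hvw, e1, e2⟩ |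
      ⟨v, hv, w, hw, hvw, e1, e2⟩ | ⟨v, hv, w, hw, hvw, e1, e2⟩ <;>
      simp_all <;> first | exact hvw | exact hvw.symm

lemma hp_inl_inr {W : Type} {H : SimpleGraph W} {P : Fin 3 → Set W} {a v : W}
    (h : (Hprime H P).Adj (Sum.inl a) (Sum.inr v)) :
    a = v ∧ a ∈ P 0 ∨ (a ∈ P 2 ∧ v ∈ P 0 ∧ H.Adj a v) := by
  obtain ⟨-, h | h⟩ := h <;>
  · rcases h with ⟨x, hx, e1, e2⟩ | ⟨x, hx, w, hw, hvw, e1, e2⟩ |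
      ⟨x, hx, w, hw, hvw, e1, e2⟩ | ⟨x, hx, w, hw, hvw, e1, e2⟩ <;> simp_all

lemma hp_mk01 {W : Type} {H : SimpleGraph W} {P : Fin 3 → Set W} {a b : W}
    (ha : a ∈ P 0) (hb : b ∈ P 1) (h : H.Adj a b) :
    (Hprime H P).Adj (Sum.inl a) (Sum.inl b) :=
  ⟨fun e => h.ne (Sum.inl_injective e), Or.inl (Or.inr (Or.inl ⟨a, ha, b, hb, h, rfl, rfl⟩))⟩

lemma hp_mk12 {W : Type} {H : SimpleGraph W} {P : Fin 3 → Set W} {a b : W}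
    (ha : a ∈ P 1) (hb : b ∈ P 2) (h : H.Adj a b) :
    (Hprime H P).Adj (Sum.inl a) (Sum.inl b) :=
  ⟨fun e => h.ne (Sum.inl_injective e), Or.inl (Or.inr (Or.inr (Or.inl ⟨a, ha, b, hb, h, rfl, rfl⟩)))⟩

lemma hp_mk20 {W : Type} {H : SimpleGraph W} {P : Fin 3 → Set W} {a b : W}
    (ha : a ∈ P 2) (hb : b ∈ P 0) (h : H.Adj a b) :
    (Hprime H P).Adj (Sum.inl a) (Sum.inr b) :=
  ⟨by simp, Or.inl (Or.inr (Or.inr (Or.inr ⟨a, ha, b, hb, h, rfl, rfl⟩)))⟩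

lemma hp_mkhat {W : Type} {H : SimpleGraph W} {P : Fin 3 → Set W} {a : W}
    (ha : a ∈ P 0) : (Hprime H P).Adj (Sum.inl a) (Sum.inr a) :=
  ⟨by simp, Or.inl (Or.inl ⟨a, ha, rfl, rfl⟩)⟩

/-- `h' : {x_1,…,x_4} → V(H')` is a colour-preserving homomorphism from the
4-cycle `C_4` to `H'` iff `h'(x_4) = (h'(x_1))^` and the restriction of `h'` to
`{x_1,x_2,x_3}` is a colour-preserving homomorphism from `K_3` to `H`; consequently,
`Hom(K_3^id, H)` is the projection of `Hom(C_4^id, H')` to `{x_1,x_2,x_3}`. -/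
theorem stmt_17 {W : Type} (H : SimpleGraph W) (P : Fin 3 → Set W)
    (hpart : ∀ w : W, ∃! i : Fin 3, w ∈ P i) :
    (∀ h' : Fin 4 → W ⊕ W,
      ((∀ i : Fin 4, h' i ∈ Pprime P i) ∧
          ∀ i j : Fin 4, (SimpleGraph.cycleGraph 4).Adj i j →
            (Hprime H P).Adj (h' i) (h' j)) ↔
        ((∃ v ∈ P 0, h' 0 = Sum.inl v ∧ h' 3 = Sum.inr v) ∧
          ∃ h : Fin 3 → W, (∀ i : Fin 3, h i ∈ P i) ∧
            (∀ i j : Fin 3, i ≠ j → H.Adj (h i) (h j)) ∧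
            ∀ i : Fin 3, h' i.castSucc = Sum.inl (h i))) ∧
    (∀ h : Fin 3 → W,
      ((∀ i : Fin 3, h i ∈ P i) ∧ ∀ i j : Fin 3, i ≠ j → H.Adj (h i) (h j)) ↔
        ∃ h' : Fin 4 → W ⊕ W,
          (∀ i : Fin 4, h' i ∈ Pprime P i) ∧
          (∀ i j : Fin 4, (SimpleGraph.cycleGraph 4).Adj i j →
            (Hprime H P).Adj (h' i) (h' j)) ∧
          ∀ i : Fin 3, h' i.castSucc = Sum.inl (h i)) := by
  have uniq : ∀ {i j : Fin 3} {w : W}, w ∈ P i → w ∈ P j → i = j :=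
    fun hi hj => ((hpart _).unique hi hj)
  have key : ∀ h' : Fin 4 → W ⊕ W,
      ((∀ i : Fin 4, h' i ∈ Pprime P i) ∧
          ∀ i j : Fin 4, (SimpleGraph.cycleGraph 4).Adj i j →
            (Hprime H P).Adj (h' i) (h' j)) ↔
        ((∃ v ∈ P 0, h' 0 = Sum.inl v ∧ h' 3 = Sum.inr v) ∧
          ∃ h : Fin 3 → W, (∀ i : Fin 3, h i ∈ P i) ∧
            (∀ i j : Fin 3, i ≠ j → H.Adj (h i) (h j)) ∧
            ∀ i : Fin 3, h' i.castSucc = Sum.inl (h i)) := by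
    intro h'
    constructor
    · rintro ⟨hmem, hadj⟩
      obtain ⟨a, ha, e0⟩ : ∃ x ∈ P 0, Sum.inl x = h' 0 := hmem 0
      obtain ⟨b, hb, e1⟩ : ∃ x ∈ P 1, Sum.inl x = h' 1 := hmem 1
      obtain ⟨c, hc, e2⟩ : ∃ x ∈ P 2, Sum.inl x = h' 2 := hmem 2
      obtain ⟨v, hv, e3⟩ : ∃ x ∈ P 0, Sum.inr x = h' 3 := hmem 3
      have A01 : H.Adj a b := by
        have := hadj 0 1 (by decide); rw [← e0, ← e1] at this; exact hp_inl_inl this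
      have A12 : H.Adj b c := by
        have := hadj 1 2 (by decide); rw [← e1, ← e2] at this; exact hp_inl_inl this
      have hva : v = a := by
        have := hadj 0 3 (by decide); rw [← e0, ← e3] at this
        rcases hp_inl_inr this with ⟨e, -⟩ | ⟨h2, -, -⟩
        · exact e.symm
        · exact absurd (uniq ha h2) (by decide)
      have A20 : H.Adj c a := by
        have := hadj 2 3 (by decide); rw [← e2, ← e3] at this
        rcases hp_inl_inr this with ⟨-, h0⟩ | ⟨-, -, hcv⟩
        · exact absurd (uniq hc h0) (by decide)
        · rwa [hva] at hcv
      refine ⟨⟨a, ha, e0.symm, by rw [← e3, hva]⟩, ![a, b, c], ?_, ?_, ?_⟩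
      · intro i; fin_cases i <;> simpa
      · intro i j hij; fin_cases i <;> fin_cases j <;> simp_all <;>
          first | exact A01.symm | exact A12.symm | exact A20 | exact A20.symm
      · intro i; fin_cases i <;> simp <;>
          first | exact e0.symm | exact e1.symm | exact e2.symm
    · rintro ⟨⟨v, hv, e0, e3⟩, h, hmem, hadj, he⟩
      have E0 : h' 0 = Sum.inl (h 0) := he 0
      have E1 : h' 1 = Sum.inl (h 1) := he 1
      have E2 : h' 2 = Sum.inl (h 2) := he 2
      have hv0 : v = h 0 := Sum.inl_injective (by rw [← e0, E0])
      have E3 : h' 3 = Sum.inr (h 0) := by rw [e3, hv0]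
      have hm0 : h 0 ∈ P 0 := hmem 0
      constructor
      · intro i; fin_cases i
        · exact ⟨h 0, hmem 0, E0.symm⟩
        · exact ⟨h 1, hmem 1, E1.symm⟩
        · exact ⟨h 2, hmem 2, E2.symm⟩
        · exact ⟨h 0, hm0, E3.symm⟩
      · intro i j hij; fin_cases i <;> fin_cases j <;>
          first
          | exact absurd hij (by decide)
          | exact show (Hprime H P).Adj (h' 0) (h' 1) by
              rw [E0, E1]; exact hp_mk01 (hmem 0) (hmem 1) (hadj 0 1 (by decide))
          | exact show (Hprime H P).Adj (h' 1) (h' 0) by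
              rw [E1, E0]; exact (hp_mk01 (hmem 0) (hmem 1) (hadj 0 1 (by decide))).symm
          | exact show (Hprime H P).Adj (h' 1) (h' 2) by
              rw [E1, E2]; exact hp_mk12 (hmem 1) (hmem 2) (hadj 1 2 (by decide))
          | exact show (Hprime H P).Adj (h' 2) (h' 1) by
              rw [E2, E1]; exact (hp_mk12 (hmem 1) (hmem 2) (hadj 1 2 (by decide))).symm
          | exact show (Hprime H P).Adj (h' 2) (h' 3) by
              rw [E2, E3]; exact hp_mk20 (hmem 2) hm0 (hadj 2 0 (by decide))
          | exact show (Hprime H P).Adj (h' 3) (h' 2) by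
              rw [E3, E2]; exact (hp_mk20 (hmem 2) hm0 (hadj 2 0 (by decide))).symm
          | exact show (Hprime H P).Adj (h' 0) (h' 3) by
              rw [E0, E3]; exact hp_mkhat hm0
          | exact show (Hprime H P).Adj (h' 3) (h' 0) by
              rw [E3, E0]; exact (hp_mkhat hm0).symm
  refine ⟨key, fun h => ⟨?_, ?_⟩⟩
  · rintro ⟨hmem, hadj⟩
    have he : ∀ i : Fin 3,
        (fun j : Fin 4 => if hj : j.val < 3 then Sum.inl (h ⟨j.val, hj⟩) else Sum.inr (h 0))
          i.castSucc = Sum.inl (h i) := fun i => by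
      simp only
      rw [dif_pos (show ((i.castSucc : Fin 4)).val < 3 from i.isLt)]
      rfl
    obtain ⟨m, a⟩ := (key (fun j : Fin 4 =>
      if hj : j.val < 3 then Sum.inl (h ⟨j.val, hj⟩) else Sum.inr (h 0))).mpr ⟨⟨h 0, hmem 0, rfl, rfl⟩, h, hmem, hadj, he⟩
    exact ⟨_, m, a, he⟩
  · rintro ⟨h', hmem', hadj', he⟩
    obtain ⟨-, h₀, hm, ha, he₀⟩ := (key h').mp ⟨hmem', hadj'⟩
    have : h₀ = h := funext fun i => Sum.inl_injective (by rw [← he₀ i, he i])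
    subst this
    exact ⟨hm, ha⟩
end
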